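/- arXiv:2305.07177 — 4 statements merged into one kernel-verified Lean document; each statement's English description precedes it below -/
import Mathlib

section
/- Let FH be a Frobenius group with complement H and kernel F, where F is a non-metacyclic finite 3-group. Then the center Z(F) contains an elementary abelian subgroup of order 27 (i.e., Z(F) has rank at least 3). -/
/-- A group is metacyclic if it has a cyclic normal subgroup with cyclic quotient.
(Using normality of `N`, cyclicity of the quotient `A ⧸ N` is expressed by the existence of a
single element `g` with `N ⊔ ⟨g⟩ = ⊤`.) -/
def IsMetacyclic (A : Type*) [Group A] : Prop :=
  ∃ N : Subgroup A, N.Normal ∧ IsCyclic N ∧ ∃ g : A, N ⊔ Subgroup.zpowers g = ⊤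

private lemma isCyclic_zpowers' {G : Type*} [Group G] (a : G) :
    IsCyclic (Subgroup.zpowers a) := by
  refine ⟨⟨⟨a, Subgroup.mem_zpowers a⟩, ?_⟩⟩
  rintro ⟨x, hx⟩
  obtain ⟨k, rfl⟩ := Subgroup.mem_zpowers_iff.mp hx
  exact Subgroup.mem_zpowers_iff.mpr ⟨k, by ext; simp⟩

private lemma isMetacyclic_of_two_gen {G : Type*} [Group G]
    (hc : ∀ a b : G, a * b = b * a) (a b : G)
    (h : Subgroup.zpowers a ⊔ Subgroup.zpowers b = ⊤) : IsMetacyclic G :=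
  ⟨Subgroup.zpowers a,
    ⟨fun n hn g => by
      have hgn : g * n * g⁻¹ = n := by rw [hc g n]; group
      rwa [hgn]⟩,
    isCyclic_zpowers' a, b, h⟩

private lemma zmod_gen {n : ℕ} (hn : 1 < n) (c : Multiplicative (ZMod n)) :
    ∃ m : ℕ, (Multiplicative.ofAdd (1 : ZMod n)) ^ m = c := by
  haveI : NeZero n := ⟨by omega⟩
  refine ⟨(Multiplicative.toAdd c).val, ?_⟩
  rw [← ofAdd_nsmul]
  rw [nsmul_eq_mul, mul_one]
  rw [ZMod.natCast_rightInverse _]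
  exact ofAdd_toAdd c

/-- A finite abelian 3-group with at most 9 solutions of `x ^ 3 = 1` is metacyclic. -/
private lemma meta_aux {G : Type*} [CommGroup G] [Finite G] (h3 : IsPGroup 3 G)
    (hΩ : Nat.card {x : G // x ^ 3 = 1} ≤ 9) : IsMetacyclic G := by
  classical
  haveI : Fact (Nat.Prime 3) := ⟨by norm_num⟩
  obtain ⟨ι, _, n, hn, ⟨e⟩⟩ := CommGroup.equiv_prod_multiplicative_zmod_of_finite G
  haveI : ∀ i, NeZero (n i) := fun i => ⟨by have := hn i; omega⟩
  have h3i : ∀ i, 3 ∣ n i := by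
    intro i
    have hPi : IsPGroup 3 (∀ j, Multiplicative (ZMod (n j))) :=
      h3.of_surjective e.toMonoidHom e.surjective
    have hfac : IsPGroup 3 (Multiplicative (ZMod (n i))) :=
      hPi.of_surjective (Pi.evalMonoidHom _ i)
        (fun x => ⟨Pi.mulSingle i x, by simp [Pi.evalMonoidHom]⟩)
    obtain ⟨k, hk⟩ := (IsPGroup.iff_card).mp hfac
    have hcardi : Nat.card (Multiplicative (ZMod (n i))) = n i := by
      simpa using Nat.card_zmod (n i)
    rw [hcardi] at hk
    rcases Nat.eq_zero_or_pos k with rfl | hkpos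
    · rw [pow_zero] at hk; have := hn i; omega
    · exact hk ▸ dvd_pow_self 3 (Nat.pos_iff_ne_zero.mp hkpos)
  -- The number of factors is at most 2.
  have hcard : Fintype.card ι ≤ 2 := by
    by_contra hgt
    push_neg at hgt
    have hc : ∀ i, ∃ c : ZMod (n i), addOrderOf c = 3 := by
      intro i
      exact exists_prime_addOrderOf_dvd_card 3 (by rw [ZMod.card]; exact h3i i)
    choose c hcord using hc
    let j : (ι → ZMod 3) → {x : ∀ i, Multiplicative (ZMod (n i)) // x ^ 3 = 1} := fun v =>
      ⟨fun i => Multiplicative.ofAdd ((v i).val • c i), by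
        funext i
        show Multiplicative.ofAdd ((v i).val • c i) ^ 3 = 1
        have h30 : (3 : ℕ) • c i = 0 := by
          rw [← hcord i]; exact addOrderOf_nsmul_eq_zero (c i)
        rw [← ofAdd_nsmul, smul_comm, h30, smul_zero]
        exact ofAdd_zero⟩
    have hj : Function.Injective j := by
      intro v w hvw
      funext i
      have h1 : Multiplicative.ofAdd ((v i).val • c i) = Multiplicative.ofAdd ((w i).val • c i) :=
        congrFun (congrArg Subtype.val hvw) i
      have h2 : (v i).val • c i = (w i).val • c i := Multiplicative.ofAdd.injective h1
      have hv : (v i).val ∈ Set.Iio (addOrderOf (c i)) := by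
        rw [hcord i]; exact ZMod.val_lt (v i)
      have hw : (w i).val ∈ Set.Iio (addOrderOf (c i)) := by
        rw [hcord i]; exact ZMod.val_lt (w i)
      exact ZMod.val_injective 3 (nsmul_injOn_Iio_addOrderOf hv hw h2)
    have hle : Nat.card (ι → ZMod 3) ≤ Nat.card {x : ∀ i, Multiplicative (ZMod (n i)) // x ^ 3 = 1} :=
      Nat.card_le_card_of_injective j hj
    have he : Nat.card {x : ∀ i, Multiplicative (ZMod (n i)) // x ^ 3 = 1}
        = Nat.card {x : G // x ^ 3 = 1} := by
      refine (Nat.card_congr (Equiv.subtypeEquiv e.toEquiv fun x => ?_)).symm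
      show x ^ 3 = 1 ↔ e x ^ 3 = 1
      exact ⟨fun hx => by rw [← map_pow, hx, map_one],
        fun hx => e.injective (by rw [map_pow, map_one]; exact hx)⟩
    have hpi : Nat.card (ι → ZMod 3) = 3 ^ Fintype.card ι := by
      rw [Nat.card_pi]
      simp [Nat.card_zmod]
    have : (27 : ℕ) ≤ 9 := by
      calc (27 : ℕ) = 3 ^ 3 := by norm_num
        _ ≤ 3 ^ Fintype.card ι := Nat.pow_le_pow_right (by norm_num) hgt
        _ = Nat.card (ι → ZMod 3) := hpi.symm
        _ ≤ Nat.card {x : ∀ i, Multiplicative (ZMod (n i)) // x ^ 3 = 1} := hle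
        _ = Nat.card {x : G // x ^ 3 = 1} := he
        _ ≤ 9 := hΩ
    omega
  by_cases hne : IsEmpty ι
  · haveI : Subsingleton G :=
      ⟨fun a b => e.injective (Subsingleton.elim _ _)⟩
    refine ⟨⊥, inferInstance, inferInstance, 1, ?_⟩
    rw [eq_top_iff]
    intro x _
    have hx1 : x = 1 := Subsingleton.elim x 1
    rw [hx1]
    exact Subgroup.one_mem _
  · haveI : Nonempty ι := not_isEmpty_iff.mp hne
    have hcover : ∃ i j : ι, ∀ k : ι, k = i ∨ k = j := by
      have h1 : 1 ≤ Fintype.card ι := Fintype.card_pos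
      rcases Nat.lt_or_ge (Fintype.card ι) 2 with h | h
      · have h1' : Fintype.card ι = 1 := by omega
        obtain ⟨i, hi⟩ := Fintype.card_eq_one_iff.mp h1'
        exact ⟨i, i, fun k => Or.inl (hi k)⟩
      · have h2' : Nat.card ι = 2 := by rw [Nat.card_eq_fintype_card]; omega
        obtain ⟨x, y, hxy, huniv⟩ := Nat.card_eq_two_iff.mp h2'
        refine ⟨x, y, fun k => ?_⟩
        have : k ∈ ({x, y} : Set ι) := huniv ▸ Set.mem_univ k
        simpa using this
    obtain ⟨i, j, hij⟩ := hcover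
    set M := fun k => Multiplicative (ZMod (n k)) with hM
    let a : ∀ k, M k := Pi.mulSingle i (Multiplicative.ofAdd 1)
    let b : ∀ k, M k := Pi.mulSingle j (Multiplicative.ofAdd 1)
    have hsingle : ∀ (k : ι) (ck : M k),
        Pi.mulSingle k ck ∈ Subgroup.zpowers (Pi.mulSingle k (Multiplicative.ofAdd (1 : ZMod (n k))) : ∀ k, M k) := by
      intro k ck
      obtain ⟨m, hm⟩ := zmod_gen (hn k) ck
      have : (Pi.mulSingle k (Multiplicative.ofAdd (1 : ZMod (n k))) : ∀ k, M k) ^ m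
          = Pi.mulSingle k ck := by
        rw [← hm]
        exact (map_pow (MonoidHom.mulSingle M k) _ m).symm
      rw [← this]
      exact Subgroup.pow_mem _ (Subgroup.mem_zpowers _) m
    have hsup : Subgroup.zpowers a ⊔ Subgroup.zpowers b = ⊤ := by
      rw [eq_top_iff]
      rintro x -
      set w : ∀ k, M k := x * (Pi.mulSingle i (x i))⁻¹ with hw
      have hxw : x = Pi.mulSingle i (x i) * w := by
        rw [hw, mul_comm (Pi.mulSingle i (x i)) (x * (Pi.mulSingle i (x i))⁻¹),
          inv_mul_cancel_right]
      have hwj : w = Pi.mulSingle j (w j) := by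
        funext k
        rcases hij k with rfl | rfl
        · by_cases hijeq : k = j
          · subst hijeq; rw [Pi.mulSingle_eq_same]
          · have hwk : w k = 1 := by
              rw [hw]
              show x k * ((Pi.mulSingle k (x k) : ∀ k, M k) k)⁻¹ = 1
              rw [Pi.mulSingle_eq_same, mul_inv_cancel]
            rw [hwk, Pi.mulSingle_eq_of_ne hijeq]
        · rw [Pi.mulSingle_eq_same]
      rw [hxw, hwj]
      exact Subgroup.mul_mem _
        (Subgroup.mem_sup_left (hsingle i (x i)))
        (Subgroup.mem_sup_right (hsingle j (w j)))
    refine isMetacyclic_of_two_gen mul_comm (e.symm a) (e.symm b) ?_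
    have hmap := congrArg (Subgroup.map e.symm.toMonoidHom) hsup
    rw [Subgroup.map_sup, MonoidHom.map_zpowers, MonoidHom.map_zpowers,
      Subgroup.map_top_of_surjective _ e.symm.surjective] at hmap
    exact hmap

private lemma exists_pow_three_aux {G : Type*} [Group G] (z : G) (hz : z ≠ 1) :
    ∀ k : ℕ, z ^ 3 ^ k = 1 → ∃ m : ℕ, z ^ 3 ^ m ≠ 1 ∧ (z ^ 3 ^ m) ^ 3 = 1 := by
  intro k
  induction k with
  | zero => intro h; exact absurd (by simpa using h) hz
  | succ k ih =>
    intro h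
    by_cases hk : z ^ 3 ^ k = 1
    · exact ih hk
    · exact ⟨k, hk, by rw [← pow_mul, ← pow_succ]; exact h⟩

/-- If `FH` is a Frobenius group (here the finite group `A` with normal subgroup `F` and
complement `H`, so `A = F ⋊ H` and `C_F(h) = 1` for all `1 ≠ h ∈ H`) whose kernel `F` is a
non-metacyclic finite `3`-group, then the center `Z(F)` contains an elementary abelian
subgroup of order `27`, i.e. `Z(F)` has rank at least `3`. -/
theorem frobenius_nonmetacyclic_3group_kernel_center_rank_ge_three
    (A : Type*) [Group A] [Finite A] (F H : Subgroup A)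
    (hFnorm : F.Normal) (hFH : F ⊓ H = ⊥) (hFHtop : F ⊔ H = ⊤)
    (hFnt : F ≠ ⊥) (hHnt : H ≠ ⊥)
    (hfrob : ∀ x ∈ H, x ≠ 1 → ∀ f ∈ F, x * f = f * x → f = 1)
    (hF3 : IsPGroup 3 F) (hnm : ¬ IsMetacyclic F) :
    ∃ E : Subgroup F, E ≤ Subgroup.center F ∧ Nat.card E = 27 ∧
      (∀ x ∈ E, x ^ 3 = 1) ∧ ∀ x ∈ E, ∀ y ∈ E, x * y = y * x := by
  classical
  haveI : Fact (Nat.Prime 3) := ⟨by norm_num⟩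
  -- the subgroup of central elements of `F` of order dividing 3, as a subgroup of `A`
  let CA : Subgroup A :=
    { carrier := {a : A | a ∈ F ∧ (∀ b ∈ F, a * b = b * a) ∧ a ^ 3 = 1}
      mul_mem' := by
        rintro x y ⟨hxF, hxc, hx3⟩ ⟨hyF, hyc, hy3⟩
        refine ⟨F.mul_mem hxF hyF, fun b hb => ?_, ?_⟩
        · rw [mul_assoc, hyc b hb, ← mul_assoc, hxc b hb, mul_assoc]
        · have hcom : Commute x y := hxc y hyF
          rw [hcom.mul_pow, hx3, hy3, one_mul]
      one_mem' := ⟨F.one_mem, fun b _ => by rw [one_mul, mul_one], one_pow 3⟩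
      inv_mem' := by
        rintro x ⟨hxF, hxc, hx3⟩
        refine ⟨F.inv_mem hxF, fun b hb => ?_, by rw [inv_pow, hx3, inv_one]⟩
        exact (Commute.inv_left (hxc b hb) : Commute x⁻¹ b) }
  have hCAmem : ∀ a : A, a ∈ CA ↔ a ∈ F ∧ (∀ b ∈ F, a * b = b * a) ∧ a ^ 3 = 1 :=
    fun a => Iff.rfl
  have hCAF : CA ≤ F := fun a ha => ha.1
  -- conjugation by anything preserves CA
  have hconj : ∀ (g a : A), a ∈ CA → g * a * g⁻¹ ∈ CA := by
    rintro g a ⟨haF, hac, ha3⟩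
    refine ⟨hFnorm.conj_mem a haF g, fun b hb => ?_, ?_⟩
    · have hb' : g⁻¹ * b * g ∈ F := by
        have := hFnorm.conj_mem b hb g⁻¹
        simpa using this
      have hcomm := hac _ hb'
      calc g * a * g⁻¹ * b = g * (a * (g⁻¹ * b * g)) * g⁻¹ := by group
        _ = g * ((g⁻¹ * b * g) * a) * g⁻¹ := by rw [hcomm]
        _ = b * (g * a * g⁻¹) := by group
    · have hcp : (g * a * g⁻¹) ^ 3 = g * a ^ 3 * g⁻¹ := by
        simp [pow_succ, mul_assoc]
      rw [hcp, ha3, mul_one, mul_inv_cancel]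
  -- as a subgroup of `F`
  let C : Subgroup F := CA.subgroupOf F
  have hCcard_eq : Nat.card C = Nat.card CA :=
    Nat.card_congr (Subgroup.subgroupOfEquivOfLe hCAF).toEquiv
  haveI : Nontrivial F := (Subgroup.nontrivial_iff_ne_bot F).mpr hFnt
  haveI : Nontrivial (Subgroup.center F) := hF3.center_nontrivial
  obtain ⟨z, hz1⟩ := exists_ne (1 : Subgroup.center F)
  have hz1' : (z : F) ≠ 1 := by
    intro h; exact hz1 (Subtype.ext h)
  obtain ⟨k, hk⟩ := hF3 (z : F)
  obtain ⟨m, hym1, hym3⟩ := exists_pow_three_aux (z : F) hz1' k hk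
  set y : F := (z : F) ^ 3 ^ m with hy
  have hyc : y ∈ Subgroup.center F := Subgroup.pow_mem _ z.2 _
  have hyCA : (y : A) ∈ CA := by
    refine ⟨y.2, fun b hb => ?_, ?_⟩
    · have := (Subgroup.mem_center_iff.mp hyc) ⟨b, hb⟩
      have h2 : (b : A) * (y : A) = (y : A) * b := congrArg Subtype.val this
      exact h2.symm
    · have : ((y ^ 3 : F) : A) = ((1 : F) : A) := congrArg Subtype.val hym3
      simpa using this
  have hCnt : Nontrivial C := by
    refine ⟨⟨⟨y, Subgroup.mem_subgroupOf.mpr hyCA⟩, 1, ?_⟩⟩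
    intro h
    exact hym1 (congrArg Subtype.val h)
  obtain ⟨kc, hkc⟩ := (IsPGroup.iff_card).mp (hF3.to_subgroup C)
  have hkc1 : 1 ≤ kc := by
    by_contra hlt
    have : kc = 0 := by omega
    rw [this, pow_zero] at hkc
    have := (Subgroup.nontrivial_iff_ne_bot C).mp hCnt
    have h1 := (Subgroup.one_lt_card_iff_ne_bot C).mpr this
    omega
  by_cases h27 : (27 : ℕ) ∣ Nat.card C
  · -- the center has rank at least 3: extract a subgroup of order 27
    obtain ⟨K, hK⟩ := Sylow.exists_subgroup_card_pow_prime (G := C) 3 (n := 3)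
      (by simpa using h27)
    have hEC : ∀ x : F, x ∈ K.map C.subtype → (x : A) ∈ CA := by
      rintro x ⟨c, _, rfl⟩
      exact Subgroup.mem_subgroupOf.mp c.2
    refine ⟨K.map C.subtype, ?_, ?_, ?_, ?_⟩
    · intro x hx
      have hxCA := hEC x hx
      refine Subgroup.mem_center_iff.mpr fun g => ?_
      exact Subtype.ext ((hxCA.2.1 g g.2).symm)
    · rw [Nat.card_congr (Subgroup.equivMapOfInjective K C.subtype
        (Subgroup.subtype_injective C)).symm.toEquiv, hK]
      norm_num
    · intro x hx
      have hxCA := hEC x hx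
      have : ((x ^ 3 : F) : A) = 1 := by simpa using hxCA.2.2
      exact Subtype.ext this
    · intro x hx y' hy'
      exact Subtype.ext ((hEC x hx).2.1 (y' : A) y'.2)
  · -- otherwise derive that F is metacyclic, a contradiction
    exfalso
    have hkc2 : kc ≤ 2 := by
      by_contra hlt
      exact h27 (hkc ▸ (by norm_num : (27:ℕ) = 3 ^ 3) ▸ pow_dvd_pow 3 (by omega))
    have hcard9 : Nat.card C = 3 ∨ Nat.card C = 9 := by
      interval_cases kc
      · left; rw [hkc]; norm_num
      · right; rw [hkc]; norm_num
    -- find a prime divisor of |H|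
    have hHcard : 1 < Nat.card H := (Subgroup.one_lt_card_iff_ne_bot H).mpr hHnt
    obtain ⟨q, hq, hqd⟩ := Nat.exists_prime_and_dvd (by omega : Nat.card H ≠ 1)
    haveI : Fact q.Prime := ⟨hq⟩
    haveI := Fintype.ofFinite H
    obtain ⟨t, ht⟩ := exists_prime_orderOf_dvd_card (G := H) q
      (by rwa [← Nat.card_eq_fintype_card])
    set t' : A := (t : A) with ht'def
    have ht' : orderOf t' = q := by rw [ht'def, Subgroup.orderOf_coe, ht]
    have ht'H : t' ∈ H := t.2
    have ht'1 : t' ≠ 1 := by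
      intro h
      rw [h, orderOf_one] at ht'
      exact hq.one_lt.ne' ht'.symm
    -- the free action of ⟨t'⟩ on the nontrivial elements of CA
    set Q : Subgroup A := Subgroup.zpowers t' with hQdef
    let S := {a : A // a ∈ CA ∧ a ≠ 1}
    letI : MulAction Q S :=
      { smul := fun g a => ⟨(g : A) * a * (g : A)⁻¹,
          ⟨hconj _ _ a.2.1, by
            intro h1
            apply a.2.2
            calc (a : A) = (g : A)⁻¹ * ((g : A) * a * (g : A)⁻¹) * g := by group
              _ = 1 := by rw [h1]; group⟩⟩
        one_smul := fun a => Subtype.ext (by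
          show ((1 : Q) : A) * a * ((1 : Q) : A)⁻¹ = (a : A)
          simp)
        mul_smul := fun g h a => Subtype.ext (by
          show ((g * h : Q) : A) * a * ((g * h : Q) : A)⁻¹
            = (g : A) * ((h : A) * a * (h : A)⁻¹) * (g : A)⁻¹
          rw [Subgroup.coe_mul, mul_inv_rev]
          group) }
    have hQp : IsPGroup q Q :=
      IsPGroup.of_card (by rw [Nat.card_zpowers, ht', pow_one])
    haveI : Finite S := Subtype.finite
    have hfix : IsEmpty (MulAction.fixedPoints Q S) := by
      refine ⟨fun x => ?_⟩
      have hx := x.2 (⟨t', Subgroup.mem_zpowers t'⟩ : Q)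
      have hx' : t' * (x.1 : A) * t'⁻¹ = (x.1 : A) := congrArg Subtype.val hx
      have hcomm : t' * (x.1 : A) = (x.1 : A) * t' := by
        have := congrArg (· * t') hx'
        simpa [mul_assoc] using this
      exact x.1.2.2 (hfrob t' ht'H ht'1 (x.1 : A) x.1.2.1.1 hcomm)
    have hmod := hQp.card_modEq_card_fixedPoints S
    haveI := hfix
    rw [show Nat.card (MulAction.fixedPoints Q S) = 0 from Nat.card_of_isEmpty] at hmod
    have hqS : q ∣ Nat.card S := Nat.modEq_zero_iff_dvd.mp hmod
    -- |S| = |CA| - 1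
    have hScard : Nat.card S + 1 = Nat.card CA := by
      haveI := Fintype.ofFinite A
      have e1 : S ≃ {x : CA // ¬ x = 1} :=
        { toFun := fun a => ⟨⟨a.1, a.2.1⟩, fun h => a.2.2 (congrArg Subtype.val h)⟩
          invFun := fun x => ⟨x.1.1, x.1.2, fun h => x.2 (Subtype.ext h)⟩
          left_inv := fun a => rfl
          right_inv := fun x => rfl }
      rw [Nat.card_congr e1]
      rw [Nat.card_eq_fintype_card, Nat.card_eq_fintype_card]
      rw [Fintype.card_subtype_compl, Fintype.card_subtype_eq]
      have hpos : 1 ≤ Fintype.card CA := Fintype.card_pos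
      omega
    have hCA9 : Nat.card CA = 3 ∨ Nat.card CA = 9 := by
      rw [← hCcard_eq]; exact hcard9
    have hq2 : q = 2 := by
      have h8 : q ∣ 8 := by
        rcases hCA9 with h | h
        · have hS2 : Nat.card S = 2 := by omega
          exact (hS2 ▸ hqS).trans ⟨4, rfl⟩
        · have hS8 : Nat.card S = 8 := by omega
          exact hS8 ▸ hqS
      have h23 : q ∣ 2 ^ 3 := by norm_num at h8 ⊢; exact h8
      have := hq.dvd_of_dvd_pow h23
      exact (Nat.prime_dvd_prime_iff_eq hq Nat.prime_two).mp this
    -- t' is an involution inverting F, hence F is abelian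
    have ht2 : t' * t' = 1 := by
      have : t' ^ orderOf t' = 1 := pow_orderOf_eq_one t'
      rw [ht', hq2, pow_two] at this
      exact this
    have htinv : t'⁻¹ = t' := inv_eq_of_mul_eq_one_left ht2
    let φ : F → F := fun f =>
      ⟨(f : A)⁻¹ * (t' * f * t'⁻¹), F.mul_mem (F.inv_mem f.2) (hFnorm.conj_mem _ f.2 t')⟩
    have hφinj : Function.Injective φ := by
      intro f g hfg
      have h1 : (f : A)⁻¹ * (t' * f * t'⁻¹) = (g : A)⁻¹ * (t' * g * t'⁻¹) :=
        congrArg Subtype.val hfg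
      have h4 : (g : A) * (f : A)⁻¹ * t' * (f : A) = t' * g := by
        have h3 := congrArg (fun u => (g : A) * u * t') h1
        simpa [mul_assoc] using h3
      have h2 : t' * ((g : A) * (f : A)⁻¹) = ((g : A) * (f : A)⁻¹) * t' := by
        have h5 := congrArg (· * (f : A)⁻¹) h4
        simp only [mul_assoc] at h5 ⊢
        rw [mul_inv_cancel, mul_one] at h5
        exact h5.symm
      have h6 := hfrob t' ht'H ht'1 ((g : A) * (f : A)⁻¹)
        (F.mul_mem g.2 (F.inv_mem f.2)) h2
      have h7 : (g : A) = (f : A) := by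
        rwa [mul_inv_eq_one] at h6
      exact Subtype.ext h7.symm
    have hφsurj : Function.Surjective φ := Finite.injective_iff_surjective.mp hφinj
    have hinvert : ∀ x : F, t' * (x : A) * t'⁻¹ = (x : A)⁻¹ := by
      intro x
      obtain ⟨f, hf⟩ := hφsurj x
      have hx : (x : A) = (f : A)⁻¹ * (t' * f * t'⁻¹) := (congrArg Subtype.val hf).symm
      rw [hx, htinv]
      have hL : t' * ((f : A)⁻¹ * (t' * f * t')) * t'
          = t' * (f : A)⁻¹ * t' * (f : A) * (t' * t') := by group
      have hR : ((f : A)⁻¹ * (t' * f * t'))⁻¹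
          = t'⁻¹ * ((f : A)⁻¹ * (t'⁻¹ * f)) := by group
      rw [hL, ht2, mul_one, hR, htinv]
      group
    have hcomm : ∀ x y' : F, x * y' = y' * x := by
      intro x y'
      have h1 : t' * ((x : A) * (y' : A)) * t'⁻¹ = ((x : A) * (y' : A))⁻¹ := by
        have := hinvert (x * y')
        simpa using this
      have h2 : t' * ((x : A) * (y' : A)) * t'⁻¹ = (x : A)⁻¹ * (y' : A)⁻¹ := by
        calc t' * ((x : A) * (y' : A)) * t'⁻¹
            = (t' * (x : A) * t'⁻¹) * (t' * (y' : A) * t'⁻¹) := by group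
          _ = (x : A)⁻¹ * (y' : A)⁻¹ := by rw [hinvert x, hinvert y']
      have h4 : (y' : A)⁻¹ * (x : A)⁻¹ = (x : A)⁻¹ * (y' : A)⁻¹ := by
        rw [← mul_inv_rev, h1.symm.trans h2]
      have h5 : (x : A) * (y' : A) = (y' : A) * (x : A) := by
        have := congrArg (fun u => u⁻¹) h4
        simpa [mul_inv_rev] using this
      exact Subtype.ext (by
        show ((x * y' : F) : A) = ((y' * x : F) : A)
        rw [Subgroup.coe_mul, Subgroup.coe_mul, h5])
    letI cg : CommGroup F := { (inferInstance : Group F) with mul_comm := hcomm }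
    have hΩ : Nat.card {x : F // x ^ 3 = 1} ≤ 9 := by
      have e2 : {x : F // x ^ 3 = 1} ≃ C :=
        { toFun := fun x => ⟨x.1, Subgroup.mem_subgroupOf.mpr
            ⟨x.1.2, fun b hb => congrArg Subtype.val (hcomm x.1 ⟨b, hb⟩),
              by simpa using congrArg Subtype.val x.2⟩⟩
          invFun := fun c => ⟨c.1, by
            have := (Subgroup.mem_subgroupOf.mp c.2).2.2
            exact Subtype.ext (by simpa using this)⟩
          left_inv := fun x => rfl
          right_inv := fun c => rfl }
      rw [Nat.card_congr e2]
      rcases hcard9 with h | h <;> omega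
    exact hnm (meta_aux hF3 hΩ)
end

section
/- Under the standing setup, the fixed-point subalgebra L_0 = C_L(Z) satisfies L_0 = C_L(F) + Σ_{f∈F} C_L(ZH^f), where the sum on the right is the sum of R-submodules and ZH^f denotes the subgroup generated by Z and the conjugate subgroup H^f = f^{-1}Hf. -/
/-- A group is supersolvable if it has a normal series with cyclic factors all of whose terms
are normal in the whole group.  (Using normality of `s i`, cyclicity of the factor
`s (i+1) ⧸ s i` is expressed by `s (i+1) = s i ⊔ ⟨g⟩` for a single element `g`.) -/
def IsSupersolvable (G : Type*) [Group G] : Prop :=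
  ∃ (n : ℕ) (s : ℕ → Subgroup G), s 0 = ⊥ ∧ s n = ⊤ ∧ (∀ i, (s i).Normal) ∧
    ∀ i < n, ∃ g : G, s (i + 1) = s i ⊔ Subgroup.zpowers g

/-- The fixed-point submodule `C_L(S)` of a set `S` of Lie-algebra automorphisms acting on `L`
via `ρ`.  (It is in fact a Lie subalgebra.) -/
def fixSub {A R L : Type*} [Group A] [CommRing R] [LieRing L] [LieAlgebra R L]
    (ρ : A → (L ≃ₗ⁅R⁆ L)) (S : Set A) : Submodule R L where
  carrier := {x | ∀ g ∈ S, ρ g x = x}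
  add_mem' := by
    intro x y hx hy g hg
    calc (ρ g) (x + y) = (ρ g) x + (ρ g) y := (ρ g).toLieHom.map_add x y
    _ = x + y := by rw [hx g hg, hy g hg]
  zero_mem' := fun g _ => (ρ g).toLieHom.map_zero
  smul_mem' := by
    intro r x hx g hg
    calc (ρ g) (r • x) = r • (ρ g) x := (ρ g).toLieHom.map_smul r x
    _ = r • x := by rw [hx g hg]

/-- The eigenspace of a Lie-algebra automorphism `e` for the eigenvalue `μ`. -/
def eigSp {R L : Type*} [CommRing R] [LieRing L] [LieAlgebra R L]
    (e : L ≃ₗ⁅R⁆ L) (μ : R) : Submodule R L where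
  carrier := {x | e x = μ • x}
  add_mem' := by
    intro x y hx hy
    simp only [Set.mem_setOf_eq] at *
    calc e (x + y) = e x + e y := e.toLieHom.map_add x y
    _ = μ • (x + y) := by rw [hx, hy, smul_add]
  zero_mem' := by
    show e 0 = μ • (0 : L)
    rw [smul_zero]; exact e.toLieHom.map_zero
  smul_mem' := by
    intro r x hx
    simp only [Set.mem_setOf_eq] at *
    calc e (r • x) = r • e x := e.toLieHom.map_smul r x
    _ = μ • r • x := by rw [hx, smul_comm]

/-- `braSpan R S T` is the `R`-submodule `[S, T]` spanned by all brackets `⁅x, y⁆` with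
`x ∈ S`, `y ∈ T`. -/
def braSpan (R : Type*) {L : Type*} [CommRing R] [LieRing L] [LieAlgebra R L]
    (S T : Set L) : Submodule R L :=
  Submodule.span R {z | ∃ x ∈ S, ∃ y ∈ T, ⁅x, y⁆ = z}

/-- `iterBra R S T n` is the left-normed iterated bracket `[S, T, …, T]` with `T` occurring
`n` times (for `n = 0` it is the span of `S`).  In particular a subalgebra with underlying
set `C` is nilpotent of class at most `c` if and only if `iterBra R C C c = ⊥`, and
`iterBra R Set.univ C c` is the span `[L, C, …, C]`. -/
def iterBra (R : Type*) {L : Type*} [CommRing R] [LieRing L] [LieAlgebra R L]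
    (S T : Set L) : ℕ → Submodule R L
  | 0 => Submodule.span R S
  | n + 1 => braSpan R ((iterBra R S T n : Submodule R L) : Set L) T

/-- The conjugate subgroup `H^f = f⁻¹ H f`. -/
def conjSubgroup {A : Type*} [Group A] (f : A) (H : Subgroup A) : Subgroup A :=
  Subgroup.map (MulAut.conj f⁻¹).toMonoidHom H

open scoped Pointwise

section Aux

variable {R L : Type*} [CommRing R] [LieRing L] [LieAlgebra R L]

lemma lieEquiv_map_sum (e : L ≃ₗ⁅R⁆ L) {β : Type*} (s : Finset β) (t : β → L) :
    e (∑ i ∈ s, t i) = ∑ i ∈ s, e (t i) :=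
  map_sum e.toLinearEquiv t s

lemma lieEquiv_map_sub (e : L ≃ₗ⁅R⁆ L) (x y : L) : e (x - y) = e x - e y :=
  map_sub e.toLinearEquiv x y

lemma lieEquiv_map_smul (e : L ≃ₗ⁅R⁆ L) (r : R) (x : L) : e (r • x) = r • e x :=
  e.toLieHom.map_smul r x

lemma lieEquiv_map_zero (e : L ≃ₗ⁅R⁆ L) : e 0 = 0 :=
  e.toLieHom.map_zero

end Aux

/-- Standing setup: a supersolvable Frobenius group `FH` (the finite group `A` with kernel
`F` elementary abelian of order `p^2` and cyclic complement `H` of order `q`), a subgroup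
`Z ≤ F` of order `p` normal in `FH` with generator `φ`, a finite commutative ring `R` with
a primitive `p`-th root of unity `ω` in which `p` is invertible, a Lie algebra `L` over `R`
on which `FH` acts by Lie-algebra automorphisms via `ρ`, and the eigenspace decomposition
`L = ⊕_{i ∈ ℤ/pℤ} L_i` of `ρ φ`.  Conclusion: `L_0 = C_L(F) + Σ_{f ∈ F} C_L(Z H^f)`. -/
theorem zero_component_decomposition
    (p : ℕ) (hp : p.Prime)
    (A : Type*) [Group A] [Finite A] (F H : Subgroup A)
    (hFnorm : F.Normal) (hFH : F ⊓ H = ⊥) (hFHtop : F ⊔ H = ⊤)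
    (hFnt : F ≠ ⊥) (hHnt : H ≠ ⊥)
    (hfrob : ∀ x ∈ H, x ≠ 1 → ∀ f ∈ F, x * f = f * x → f = 1)
    (hss : IsSupersolvable A)
    (hFcard : Nat.card F = p ^ 2) (hFexp : ∀ f ∈ F, f ^ p = 1)
    (hFab : ∀ f ∈ F, ∀ g ∈ F, f * g = g * f)
    (q : ℕ) (hHcard : Nat.card H = q) (hHcyc : IsCyclic H)
    (Z : Subgroup A) (hZF : Z ≤ F) (hZnorm : Z.Normal) (hZcard : Nat.card Z = p)
    (φ : A) (hφZ : φ ∈ Z) (hφgen : Z ≤ Subgroup.zpowers φ)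
    (R : Type*) [CommRing R] [Finite R]
    (ω : R) (hω : IsPrimitiveRoot ω p) (hpu : IsUnit (p : R))
    (L : Type*) [LieRing L] [LieAlgebra R L]
    (ρ : A → (L ≃ₗ⁅R⁆ L))
    (hρone : ∀ x : L, ρ 1 x = x)
    (hρmul : ∀ g₁ g₂ : A, ∀ x : L, ρ (g₁ * g₂) x = ρ g₁ (ρ g₂ x))
    (Li : ZMod p → Submodule R L)
    (hLi : ∀ i : ZMod p, Li i = eigSp (ρ φ) (ω ^ i.val))
    (hdec : DirectSum.IsInternal Li)
    :
    Li 0 = fixSub ρ (F : Set A) ⊔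
      ⨆ f ∈ F, fixSub ρ ((Z ⊔ conjSubgroup f H : Subgroup A) : Set A) := by
  classical
  haveI : NeZero p := ⟨hp.ne_zero⟩
  letI : Fintype A := Fintype.ofFinite A
  letI : Fintype F := Fintype.ofFinite _
  letI : Fintype H := Fintype.ofFinite _
  have hρinv : ∀ (g : A) (v : L), ρ g v = v → ρ g⁻¹ v = v := by
    intro g v hv
    conv_lhs => rw [← hv, ← hρmul, inv_mul_cancel, hρone]
  -- the stabilizer subgroup of a vector
  let St : L → Subgroup A := fun v =>
    { carrier := {g | ρ g v = v}
      one_mem' := hρone v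
      mul_mem' := by
        intro a b ha hb
        simp only [Set.mem_setOf_eq] at *
        rw [hρmul, hb, ha]
      inv_mem' := by
        intro a ha
        exact hρinv a v ha }
  have memSt : ∀ (v : L) (g : A), g ∈ St v ↔ ρ g v = v := fun _ _ => Iff.rfl
  have hLi0 : ∀ v : L, v ∈ Li 0 ↔ ρ φ v = v := by
    intro v
    rw [hLi 0]
    have h0 : ((0 : ZMod p).val) = 0 := ZMod.val_zero
    have : v ∈ eigSp (ρ φ) (ω ^ (0 : ZMod p).val) ↔ ρ φ v = ω ^ (0 : ZMod p).val • v :=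
      Iff.rfl
    rw [this, h0, pow_zero, one_smul]
  have hZfix : ∀ v : L, ρ φ v = v → ∀ z ∈ Z, ρ z v = v := by
    intro v hv z hz
    exact (Subgroup.zpowers_le.mpr ((memSt v φ).mpr hv)).trans' hφgen hz
  apply le_antisymm
  swap
  · apply sup_le
    · intro v hv
      exact (hLi0 v).mpr (hv φ (hZF hφZ))
    · refine iSup₂_le fun f hf => ?_
      intro v hv
      exact (hLi0 v).mpr (hv φ (Subgroup.mem_sup_left hφZ))
  · intro x hx
    rw [hLi0] at hx
    have hxZ : ∀ z ∈ Z, ρ z x = x := hZfix x hx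
    obtain ⟨u0, hu0⟩ := hpu
    set ι : R := ↑u0⁻¹ with hι
    have hinv : ι * (p : R) = 1 := by rw [← hu0]; exact u0.inv_mul
    set X : L := ∑ f : F, ρ (f : A) x with hX
    set w : L := (ι * ι) • X with hw
    -- w is fixed by F
    have hXF : ∀ g ∈ F, ρ g X = X := by
      intro g hg
      rw [hX, lieEquiv_map_sum]
      exact Fintype.sum_equiv (Equiv.mulLeft (⟨g, hg⟩ : F))
        (fun f => ρ g (ρ (f : A) x)) (fun f => ρ (f : A) x)
        (fun f => (hρmul g (f : A) x).symm)
    have hwF : ∀ g ∈ F, ρ g w = w := by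
      intro g hg
      rw [hw, lieEquiv_map_smul, hXF g hg]
    set y : L := x - w with hy'
    have hcardF : (Finset.univ : Finset F).card = p ^ 2 := by
      rw [Finset.card_univ, ← Nat.card_eq_fintype_card, hFcard]
    have hp2X : (p ^ 2 : ℕ) • w = X := by
      rw [hw, ← Nat.cast_smul_eq_nsmul R, smul_smul]
      have : (((p ^ 2 : ℕ) : R)) * (ι * ι) = (ι * (p : R)) * (ι * (p : R)) := by
        push_cast; ring
      rw [this, hinv, one_mul, one_smul]
    have hFy : ∑ f : F, ρ (f : A) y = 0 := by
      have h1 : ∑ f : F, ρ (f : A) y = X - ∑ f : F, ρ (f : A) w := by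
        rw [hy']
        simp only [lieEquiv_map_sub]
        rw [Finset.sum_sub_distrib, hX]
      have h2 : ∑ f : F, ρ (f : A) w = (p ^ 2 : ℕ) • w := by
        have h2a : ∑ f : F, ρ (f : A) w = ∑ _f : F, w :=
          Finset.sum_congr rfl (fun f _ => hwF (f : A) f.2)
        rw [h2a, Finset.sum_const, hcardF]
      rw [h1, h2, hp2X, sub_self]
    -- total sum of the orbit of y vanishes
    have hS : ∑ g : A, ρ g y = 0 := by
      have h1 : ∀ f : F, ∑ g : A, ρ g y = ∑ g : A, ρ g (ρ (f : A) y) := by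
        intro f
        refine (Fintype.sum_equiv (Equiv.mulRight (f : A))
          (fun g => ρ g (ρ (f : A) y)) (fun g => ρ g y)
          (fun g => (hρmul g (f : A) y).symm)).symm
      have h2 : (p ^ 2 : ℕ) • (∑ g : A, ρ g y) = 0 := by
        calc (p ^ 2 : ℕ) • (∑ g : A, ρ g y)
            = ∑ _f : F, ∑ g : A, ρ g y := by rw [Finset.sum_const, hcardF]
          _ = ∑ f : F, ∑ g : A, ρ g (ρ (f : A) y) :=
              Finset.sum_congr rfl fun f _ => h1 f
          _ = ∑ g : A, ∑ f : F, ρ g (ρ (f : A) y) := Finset.sum_comm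
          _ = ∑ g : A, ρ g (∑ f : F, ρ (f : A) y) :=
              Finset.sum_congr rfl fun g _ => (lieEquiv_map_sum _ _ _).symm
          _ = 0 := by rw [hFy]; simp [lieEquiv_map_zero]
      have h4 : (∑ g : A, ρ g y) = (ι * ι) • ((p ^ 2 : ℕ) • (∑ g : A, ρ g y)) := by
        rw [← Nat.cast_smul_eq_nsmul R, smul_smul]
        have : (ι * ι) * ((p ^ 2 : ℕ) : R) = (ι * (p : R)) * (ι * (p : R)) := by
          push_cast; ring
        rw [this, hinv, one_mul, one_smul]
      rw [h4, h2, smul_zero]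
    -- invariance of C_L(Z) under the whole group
    have hMinv : ∀ (g : A) (v : L), (∀ z ∈ Z, ρ z v = v) → ∀ z ∈ Z, ρ z (ρ g v) = ρ g v := by
      intro g v hv z hz
      have h1 : z * g = g * (g⁻¹ * z * g) := by group
      rw [← hρmul, h1, hρmul]
      have h2 : g⁻¹ * z * g ∈ Z := by
        have := hZnorm.conj_mem z hz g⁻¹
        simpa using this
      rw [hv _ h2]
    have hyZ : ∀ z ∈ Z, ρ z y = y := by
      intro z hz
      have hXZ : ρ z X = X := by
        rw [hX, lieEquiv_map_sum]
        exact Finset.sum_congr rfl fun f _ => hMinv (f : A) x hxZ z hz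
      rw [hy', lieEquiv_map_sub, hxZ z hz, hw, lieEquiv_map_smul, hXZ]
    -- the pieces c f
    set c : F → L := fun f => ∑ h : H, ρ ((f : A)⁻¹ * h * f) y with hc
    have hcZ : ∀ f : F, ∀ z ∈ Z, ρ z (c f) = c f := by
      intro f z hz
      simp only [hc]
      rw [lieEquiv_map_sum]
      exact Finset.sum_congr rfl fun h _ => hMinv _ y hyZ z hz
    have hcH : ∀ f : F, ∀ g ∈ conjSubgroup (f : A) H, ρ g (c f) = c f := by
      intro f g hg
      obtain ⟨h', hh', rfl⟩ := hg
      have hconj : (MulAut.conj ((f : A))⁻¹).toMonoidHom h' = (f : A)⁻¹ * h' * f := by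
        simp [MulAut.conj_apply]
      rw [hconj]
      simp only [hc]
      rw [lieEquiv_map_sum]
      refine Fintype.sum_equiv (Equiv.mulLeft (⟨h', hh'⟩ : H))
        (fun h => ρ ((f : A)⁻¹ * h' * f) (ρ ((f : A)⁻¹ * h * f) y))
        (fun h => ρ ((f : A)⁻¹ * h * f) y) (fun h => ?_)
      show ρ ((f : A)⁻¹ * h' * f) (ρ ((f : A)⁻¹ * h * f) y)
          = ρ ((f : A)⁻¹ * (((⟨h', hh'⟩ : H) * h : H) : A) * f) y
      rw [← hρmul]
      congr 1
      push_cast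
      group
    have hcfix : ∀ f : F, (c f) ∈ fixSub ρ ((Z ⊔ conjSubgroup (f : A) H : Subgroup A) : Set A) := by
      intro f
      have hle : Z ⊔ conjSubgroup (f : A) H ≤ St (c f) :=
        sup_le (fun z hz => (memSt _ _).mpr (hcZ f z hz))
          (fun g hg => (memSt _ _).mpr (hcH f g hg))
      intro g hg
      exact hle hg
    -- the key counting identity
    have hsplit : ∀ f : F, c f = y + ∑ h ∈ (Finset.univ.erase (1 : H)),
        ρ ((f : A)⁻¹ * h * f) y := by
      intro f
      simp only [hc]
      rw [← Finset.add_sum_erase Finset.univ _ (Finset.mem_univ (1 : H))]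
      congr 1
      have h1 : ((f : A)⁻¹ * ((1 : H) : A) * f) = 1 := by simp
      rw [h1, hρone]
    have hDsum : ∑ q ∈ (Finset.univ : Finset F) ×ˢ (Finset.univ.erase (1 : H)),
        ρ ((q.1 : A)⁻¹ * q.2 * q.1) y
        = ∑ g ∈ Finset.univ.filter (fun g : A => g ∉ F), ρ g y := by
      refine Finset.sum_bij (fun q _ => (q.1 : A)⁻¹ * q.2 * q.1) ?_ ?_ ?_ ?_
      · rintro ⟨f, h⟩ hq
        have hh1 : h ≠ 1 := (Finset.mem_erase.mp (Finset.mem_product.mp hq).2).1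
        simp only [Finset.mem_filter, Finset.mem_univ, true_and]
        intro hmem
        have hhF : (h : A) ∈ F := by
          have := hFnorm.conj_mem _ hmem (f : A)
          have heq : (f : A) * ((f : A)⁻¹ * h * f) * (f : A)⁻¹ = (h : A) := by group
          rwa [heq] at this
        have : (h : A) ∈ F ⊓ H := ⟨hhF, h.2⟩
        rw [hFH] at this
        exact hh1 (Subtype.ext (Subgroup.mem_bot.mp this))
      · rintro ⟨f₁, h₁⟩ hq₁ ⟨f₂, h₂⟩ hq₂ heq
        have hh₁ : h₁ ≠ 1 := (Finset.mem_erase.mp (Finset.mem_product.mp hq₁).2).1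
        have hd : (f₂ : A) * (f₁ : A)⁻¹ ∈ F := mul_mem f₂.2 (inv_mem f₁.2)
        -- from heq : f₁⁻¹ h₁ f₁ = f₂⁻¹ h₂ f₂
        have heq' : (f₁ : A)⁻¹ * h₁ * f₁ = (f₂ : A)⁻¹ * h₂ * f₂ := heq
        have key : (h₂ : A) = ((f₂ : A) * (f₁ : A)⁻¹) * h₁ * ((f₂ : A) * (f₁ : A)⁻¹)⁻¹ := by
          have := heq'
          have h5 : (h₂ : A) = (f₂ : A) * ((f₁ : A)⁻¹ * h₁ * f₁) * (f₂ : A)⁻¹ := by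
            rw [this]; group
          rw [h5]; group
        have hn : (h₂ : A) * (h₁ : A)⁻¹ ∈ F := by
          have h6 : (h₂ : A) * (h₁ : A)⁻¹
              = (((f₂ : A) * (f₁ : A)⁻¹) * h₁ * ((f₂ : A) * (f₁ : A)⁻¹)⁻¹) * (h₁ : A)⁻¹ := by
            rw [← key]
          rw [h6]
          have h7 := hFnorm.conj_mem _ (inv_mem hd) (h₁ : A)
          have h8 : (((f₂ : A) * (f₁ : A)⁻¹) * h₁ * ((f₂ : A) * (f₁ : A)⁻¹)⁻¹) * (h₁ : A)⁻¹
              = ((f₂ : A) * (f₁ : A)⁻¹) * ((h₁ : A) * ((f₂ : A) * (f₁ : A)⁻¹)⁻¹ * (h₁ : A)⁻¹) := by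
            group
          rw [h8]
          exact mul_mem hd h7
        have hnH : (h₂ : A) * (h₁ : A)⁻¹ ∈ H := mul_mem h₂.2 (inv_mem h₁.2)
        have h9 : (h₂ : A) * (h₁ : A)⁻¹ ∈ F ⊓ H := ⟨hn, hnH⟩
        rw [hFH] at h9
        have hh12 : (h₂ : A) = (h₁ : A) := by
          have := Subgroup.mem_bot.mp h9
          rw [mul_inv_eq_one] at this
          exact this
        have hcomm : (h₁ : A) * ((f₂ : A) * (f₁ : A)⁻¹) = ((f₂ : A) * (f₁ : A)⁻¹) * h₁ := by
          have := key
          rw [hh12] at this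
          calc (h₁ : A) * ((f₂ : A) * (f₁ : A)⁻¹)
              = (((f₂ : A) * (f₁ : A)⁻¹) * h₁ * ((f₂ : A) * (f₁ : A)⁻¹)⁻¹)
                * ((f₂ : A) * (f₁ : A)⁻¹) := by rw [← this]
            _ = ((f₂ : A) * (f₁ : A)⁻¹) * h₁ := by group
        have hd1 : (f₂ : A) * (f₁ : A)⁻¹ = 1 := by
          refine hfrob (h₁ : A) h₁.2 ?_ _ hd hcomm
          intro habs
          exact hh₁ (Subtype.ext habs)
        have hf12 : (f₁ : A) = (f₂ : A) := by
          rw [mul_inv_eq_one] at hd1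
          exact hd1.symm
        have : f₁ = f₂ := Subtype.ext hf12
        have : h₁ = h₂ := Subtype.ext hh12.symm
        exact Prod.ext (Subtype.ext hf12) (Subtype.ext hh12.symm)
      · intro g hg
        have hgF : g ∉ F := by
          have := Finset.mem_filter.mp hg
          exact this.2
        haveI : F.Normal := hFnorm
        have hgFH : g ∈ (F : Set A) * (H : Set A) := by
          have hmem : g ∈ F ⊔ H := by rw [hFHtop]; trivial
          have hset : g ∈ ((F ⊔ H : Subgroup A) : Set A) := hmem
          rwa [Subgroup.normal_mul F H] at hset
        obtain ⟨a, ha, b, hb, hab⟩ := hgFH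
        have hb1 : b ≠ 1 := by
          intro habs
          apply hgF
          have hab' : a * b = g := hab
          rw [← hab', habs, mul_one]
          exact ha
        -- the map θ f = f⁻¹ (b f b⁻¹) is injective, hence surjective on F
        have hθbij : Function.Surjective (fun f : F =>
            (⟨(f : A)⁻¹ * (b * f * b⁻¹),
              mul_mem (inv_mem f.2) (by simpa using hFnorm.conj_mem _ f.2 b)⟩ : F)) := by
          rw [← Finite.injective_iff_surjective]
          intro f₁ f₂ hf
          have hco : (f₁ : A)⁻¹ * (b * f₁ * b⁻¹) = (f₂ : A)⁻¹ * (b * f₂ * b⁻¹) :=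
            congrArg Subtype.val hf
          have he : (f₂ : A) * (f₁ : A)⁻¹ = b * ((f₂ : A) * (f₁ : A)⁻¹) * b⁻¹ := by
            have h2 := congrArg (fun t => (f₂ : A) * t * (b * (f₁ : A)⁻¹ * b⁻¹)) hco
            calc (f₂ : A) * (f₁ : A)⁻¹
                = (f₂ : A) * ((f₁ : A)⁻¹ * (b * f₁ * b⁻¹)) * (b * (f₁ : A)⁻¹ * b⁻¹) := by group
              _ = (f₂ : A) * ((f₂ : A)⁻¹ * (b * f₂ * b⁻¹)) * (b * (f₁ : A)⁻¹ * b⁻¹) := by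
                  rw [hco]
              _ = b * ((f₂ : A) * (f₁ : A)⁻¹) * b⁻¹ := by group
          have hcomm : b * ((f₂ : A) * (f₁ : A)⁻¹) = ((f₂ : A) * (f₁ : A)⁻¹) * b := by
            calc b * ((f₂ : A) * (f₁ : A)⁻¹)
                = (b * ((f₂ : A) * (f₁ : A)⁻¹) * b⁻¹) * b := by group
              _ = ((f₂ : A) * (f₁ : A)⁻¹) * b := by rw [← he]
          have h10 : (f₂ : A) * (f₁ : A)⁻¹ = 1 :=
            hfrob b hb hb1 _ (mul_mem f₂.2 (inv_mem f₁.2)) hcomm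
          rw [mul_inv_eq_one] at h10
          exact Subtype.ext h10.symm
        obtain ⟨f, hf⟩ := hθbij ⟨a, ha⟩
        have hfa : (f : A)⁻¹ * (b * f * b⁻¹) = a := congrArg Subtype.val hf
        refine ⟨(f, ⟨b, hb⟩), ?_, ?_⟩
        · refine Finset.mem_product.mpr ⟨Finset.mem_univ _, Finset.mem_erase.mpr ⟨?_, Finset.mem_univ _⟩⟩
          intro habs
          exact hb1 (congrArg Subtype.val habs)
        · show (f : A)⁻¹ * b * f = g
          have hab' : a * b = g := hab
          rw [← hab', ← hfa]
          group
      · intro q hq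
        rfl
    have hmemsum : ∑ g ∈ Finset.univ.filter (fun g : A => g ∈ F), ρ g y
        = ∑ f : F, ρ (f : A) y := by
      exact Finset.sum_subtype (Finset.univ.filter (fun g : A => g ∈ F))
        (fun g => by simp) (fun g => ρ g y)
    have hnot : ∑ g ∈ Finset.univ.filter (fun g : A => g ∉ F), ρ g y = 0 := by
      have h11 := Finset.sum_filter_add_sum_filter_not Finset.univ
        (fun g : A => g ∈ F) (fun g => ρ g y)
      rw [hmemsum, hFy, zero_add] at h11
      rw [h11, hS]
    have hkey : ∑ f : F, c f = (p ^ 2 : ℕ) • y := by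
      calc ∑ f : F, c f
          = ∑ f : F, (y + ∑ h ∈ (Finset.univ.erase (1 : H)), ρ ((f : A)⁻¹ * h * f) y) :=
            Finset.sum_congr rfl fun f _ => hsplit f
        _ = (∑ _f : F, y) + ∑ f : F, ∑ h ∈ (Finset.univ.erase (1 : H)),
              ρ ((f : A)⁻¹ * h * f) y := Finset.sum_add_distrib
        _ = (p ^ 2 : ℕ) • y + ∑ q ∈ (Finset.univ : Finset F) ×ˢ (Finset.univ.erase (1 : H)),
              ρ ((q.1 : A)⁻¹ * q.2 * q.1) y := by
            rw [Finset.sum_const, hcardF, Finset.sum_product]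
        _ = (p ^ 2 : ℕ) • y + 0 := by rw [hDsum, hnot]
        _ = (p ^ 2 : ℕ) • y := add_zero _
    have hy4 : y = ∑ f : F, (ι * ι) • c f := by
      rw [← Finset.smul_sum, hkey, ← Nat.cast_smul_eq_nsmul R, smul_smul]
      have : (ι * ι) * ((p ^ 2 : ℕ) : R) = (ι * (p : R)) * (ι * (p : R)) := by
        push_cast; ring
      rw [this, hinv, one_mul, one_smul]
    have hyB : y ∈ ⨆ f, ⨆ (_ : f ∈ F), fixSub ρ ((Z ⊔ conjSubgroup f H : Subgroup A) : Set A) := by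
      rw [hy4]
      refine Submodule.sum_mem _ (fun f _ => ?_)
      exact le_iSup₂ (f := fun (f : A) (_ : f ∈ F) =>
        fixSub ρ ((Z ⊔ conjSubgroup f H : Subgroup A) : Set A)) (f : A) f.2
        (Submodule.smul_mem _ _ (hcfix f))
    have hwA : w ∈ fixSub ρ (F : Set A) := fun g hg => hwF g hg
    have hxwy : x = w + y := by rw [hy']; abel
    rw [hxwy]
    exact Submodule.add_mem _ (Submodule.mem_sup_left hwA) (Submodule.mem_sup_right hyB)
end

section
/- Under the standing setup, suppose additionally that C_L(x) is nilpotent of class at most d for every nontrivial x ∈ F. Then [L, C_L(F), …, C_L(F)] = 0, where C_L(F) occurs d times in the iterated bracket. -/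
section Omega
variable {R : Type*} [CommRing R] {ω : R} {p : ℕ}

lemma omega_pow_mod (hωp : ω ^ p = 1) (m : ℕ) : ω ^ m = ω ^ (m % p) := by
  conv_lhs => rw [← Nat.div_add_mod m p]
  rw [pow_add, pow_mul, hωp, one_pow, one_mul]

lemma omega_pow_natCast [NeZero p] (hωp : ω ^ p = 1) (m : ℕ) :
    ω ^ m = ω ^ ((m : ZMod p)).val := by
  rw [ZMod.val_natCast]; exact omega_pow_mod hωp m

lemma omega_pow_val_add [NeZero p] (hωp : ω ^ p = 1) (a b : ZMod p) :
    ω ^ ((a + b).val) = ω ^ a.val * ω ^ b.val := by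
  rw [← pow_add, ZMod.val_add, ← omega_pow_mod hωp]

end Omega

lemma eig_decomp {R L : Type*} [CommRing R] [AddCommGroup L] [Module R L]
    (p : ℕ) [NeZero p] (hp : p.Prime) (ω invp : R) (hωp : ω ^ p = 1) (hinv : invp * (p : R) = 1)
    (hreg : ∀ x : L, ω • x = x → x = 0)
    (e : L →ₗ[R] L) (hep : ∀ y : L, (e ^ p) y = y)
    (N : Submodule R L) (hN : ∀ y ∈ N, e y ∈ N)
    (x : L) (hx : x ∈ N) :
    ∃ c : ZMod p → L, (∀ j, c j ∈ N) ∧ (∀ j, e (c j) = ω ^ (j : ZMod p).val • c j) ∧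
      x = ∑ j : ZMod p, c j := by
  haveI : Fact p.Prime := ⟨hp⟩
  haveI : NeZero p := ⟨hp.pos.ne'⟩
  haveI : Fact (1 < p) := ⟨hp.one_lt⟩
  -- power of e mod p
  have haux : ∀ (t : ℕ) (y : L), ((e ^ p) ^ t) y = y := by
    intro t
    induction t with
    | zero => intro y; simp
    | succ n ih => intro y; rw [pow_succ', Module.End.mul_apply, ih, hep]
  have hmodN : ∀ (m : ℕ) (y : L), (e ^ m) y = (e ^ (m % p)) y := by
    intro m y
    conv_lhs => rw [← Nat.div_add_mod m p]
    rw [pow_add, pow_mul, Module.End.mul_apply, haux]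
  -- s₀ annihilates L
  have hs0 : ∀ y : L, (∑ m : ZMod p, ω ^ m.val) • y = 0 := by
    intro y
    have h1 : ω * (∑ m : ZMod p, ω ^ m.val) = ∑ m : ZMod p, ω ^ m.val := by
      rw [Finset.mul_sum]
      refine Fintype.sum_equiv (Equiv.addRight (1 : ZMod p)) _ _ fun m => ?_
      rw [Equiv.coe_addRight, omega_pow_val_add hωp m 1, ZMod.val_one, pow_one, mul_comm]
    apply hreg
    rw [smul_smul, h1]
  -- the orbit map
  set α : ZMod p → L := fun k => (e ^ k.val) x with hα
  have hα0 : α 0 = x := by simp [hα]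
  have hαmemN : ∀ m : ℕ, (e ^ m) x ∈ N := by
    intro m
    induction m with
    | zero => simpa using hx
    | succ n ih => rw [pow_succ', Module.End.mul_apply]; exact hN _ ih
  have hαmem : ∀ k, α k ∈ N := fun k => hαmemN k.val
  have hstep : ∀ k : ZMod p, e (α k) = α (k + 1) := by
    intro k
    show e ((e ^ k.val) x) = (e ^ ((k + 1).val)) x
    rw [ZMod.val_add, ZMod.val_one, ← hmodN, pow_succ', Module.End.mul_apply]
  refine ⟨fun j => invp • ∑ k : ZMod p, ω ^ ((-j * k).val) • α k, ?_, ?_, ?_⟩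
  · intro j
    exact N.smul_mem _ (Submodule.sum_mem _ fun k _ => N.smul_mem _ (hαmem k))
  · intro j
    rw [map_smul, map_sum]
    simp only [map_smul, hstep]
    have hre : (∑ k : ZMod p, ω ^ ((-j * k).val) • α (k + 1))
        = ∑ m : ZMod p, (ω ^ j.val * ω ^ ((-j * m).val)) • α m := by
      refine Fintype.sum_equiv (Equiv.addRight (1 : ZMod p)) _ _ fun k => ?_
      rw [Equiv.coe_addRight]
      congr 1
      have h2 : j + (-j * (k + 1)) = -j * k := by ring
      rw [← h2, omega_pow_val_add hωp]
    rw [hre]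
    simp only [mul_smul, ← Finset.smul_sum]
    rw [smul_comm]
  · show x = ∑ j : ZMod p, invp • ∑ k : ZMod p, ω ^ ((-j * k).val) • α k
    have hswap : ∑ j : ZMod p, (invp • ∑ k : ZMod p, ω ^ ((-j * k).val) • α k)
        = invp • ∑ k : ZMod p, (∑ j : ZMod p, ω ^ ((-j * k).val)) • α k := by
      rw [← Finset.smul_sum, Finset.sum_comm]
      congr 1
      refine Finset.sum_congr rfl fun k _ => ?_
      rw [Finset.sum_smul]
    rw [hswap]
    have hsingle : ∑ k : ZMod p, (∑ j : ZMod p, ω ^ ((-j * k).val)) • α k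
        = (p : R) • x := by
      rw [Finset.sum_eq_single (0 : ZMod p)]
      · simp only [mul_zero, ZMod.val_zero, pow_zero, Finset.sum_const, Finset.card_univ,
          ZMod.card, nsmul_eq_mul, mul_one, hα0]
      · intro k _ hk
        have hbij : Function.Bijective (fun j : ZMod p => -j * k) := by
          apply Finite.injective_iff_bijective.mp
          intro a b hab
          simpa using mul_right_cancel₀ hk hab
        have : (∑ j : ZMod p, ω ^ ((-j * k).val)) = ∑ m : ZMod p, ω ^ m.val :=
          Fintype.sum_bijective _ hbij _ _ fun j => rfl
        rw [this, hs0]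
      · intro h; exact absurd (Finset.mem_univ 0) h
    rw [hsingle, smul_smul, hinv, one_smul]

section BraLemmas
variable {R L : Type*} [CommRing R] [LieRing L] [LieAlgebra R L]

lemma braSpan_le_iff {S T : Set L} {P : Submodule R L} :
    braSpan R S T ≤ P ↔ ∀ x ∈ S, ∀ y ∈ T, ⁅x, y⁆ ∈ P := by
  rw [braSpan, Submodule.span_le]
  constructor
  · intro h x hx y hy; exact h ⟨x, hx, y, hy, rfl⟩
  · rintro h z ⟨x, hx, y, hy, rfl⟩; exact h x hx y hy

lemma braSpan_mono {S S' T T' : Set L} (hS : S ⊆ S') (hT : T ⊆ T') :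
    braSpan R S T ≤ braSpan R S' T' :=
  Submodule.span_mono (by rintro z ⟨x, hx, y, hy, rfl⟩; exact ⟨x, hS hx, y, hT hy, rfl⟩)

lemma iterBra_mono {S S' T T' : Set L} (hS : S ⊆ S') (hT : T ⊆ T') :
    ∀ n, iterBra R S T n ≤ iterBra R S' T' n
  | 0 => Submodule.span_mono hS
  | n + 1 => braSpan_mono (SetLike.coe_subset_coe.mpr (iterBra_mono hS hT n)) hT

def braT (T : Set L) (P : Submodule R L) : Submodule R L where
  carrier := {x | ∀ y ∈ T, ⁅x, y⁆ ∈ P}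
  add_mem' := by
    intro a b ha hb y hy
    rw [add_lie]; exact P.add_mem (ha y hy) (hb y hy)
  zero_mem' := by
    intro y hy; rw [zero_lie]; exact P.zero_mem
  smul_mem' := by
    intro r a ha y hy
    rw [smul_lie]; exact P.smul_mem r (ha y hy)

lemma braSpan_iSup_le {ι : Sort*} (f : ι → Submodule R L) (T : Set L) :
    braSpan R (↑(⨆ i, f i) : Set L) T ≤ ⨆ i, braSpan R (f i : Set L) T := by
  rw [braSpan_le_iff]
  intro x hx y hy
  have key : (⨆ i, f i) ≤ braT T (⨆ i, braSpan R (f i : Set L) T) := by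
    refine iSup_le fun i => ?_
    intro z hz w hw
    exact Submodule.mem_iSup_of_mem i (Submodule.subset_span ⟨z, hz, w, hw, rfl⟩)
  exact key hx y hy

lemma iterBra_univ_le_iSup {ι : Sort*} (f : ι → Submodule R L) (T : Set L)
    (htop : (⊤ : Submodule R L) ≤ ⨆ i, f i) :
    ∀ n, iterBra R (Set.univ : Set L) T n ≤ ⨆ i, iterBra R (f i : Set L) T n
  | 0 => by
    simpa [iterBra, Submodule.span_univ, Submodule.span_eq] using htop
  | n + 1 => by
    calc iterBra R (Set.univ : Set L) T (n + 1)
        ≤ braSpan R (↑(⨆ i, iterBra R (f i : Set L) T n) : Set L) T :=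
          braSpan_mono (SetLike.coe_subset_coe.mpr
            (le_trans (iterBra_univ_le_iSup f T htop n) le_rfl)) le_rfl
      _ ≤ ⨆ i, braSpan R (↑(iterBra R (f i : Set L) T n) : Set L) T := braSpan_iSup_le _ T
      _ = ⨆ i, iterBra R (f i : Set L) T (n + 1) := rfl

end BraLemmas



/-- Standing setup: a supersolvable Frobenius group `FH` (the finite group `A` with kernel
`F` elementary abelian of order `p^2` and cyclic complement `H` of order `q`), a subgroup
`Z ≤ F` of order `p` normal in `FH` with generator `φ`, a finite commutative ring `R` with
a primitive `p`-th root of unity `ω` in which `p` is invertible, a Lie algebra `L` over `R`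
on which `FH` acts by Lie-algebra automorphisms via `ρ`, and the eigenspace decomposition
`L = ⊕_{i ∈ ℤ/pℤ} L_i` of `ρ φ`.  If moreover `C_L(x)` is nilpotent of class at most `d`
for every `x ∈ F^#`, then `[L, C_L(F), …, C_L(F)] = 0` with `C_L(F)` occurring `d`
times. -/
theorem bracket_with_kernel_fixed_points_vanishes
    (p : ℕ) (hp : p.Prime)
    (A : Type*) [Group A] [Finite A] (F H : Subgroup A)
    (hFnorm : F.Normal) (hFH : F ⊓ H = ⊥) (hFHtop : F ⊔ H = ⊤)
    (hFnt : F ≠ ⊥) (hHnt : H ≠ ⊥)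
    (hfrob : ∀ x ∈ H, x ≠ 1 → ∀ f ∈ F, x * f = f * x → f = 1)
    (hss : IsSupersolvable A)
    (hFcard : Nat.card F = p ^ 2) (hFexp : ∀ f ∈ F, f ^ p = 1)
    (hFab : ∀ f ∈ F, ∀ g ∈ F, f * g = g * f)
    (q : ℕ) (hHcard : Nat.card H = q) (hHcyc : IsCyclic H)
    (Z : Subgroup A) (hZF : Z ≤ F) (hZnorm : Z.Normal) (hZcard : Nat.card Z = p)
    (φ : A) (hφZ : φ ∈ Z) (hφgen : Z ≤ Subgroup.zpowers φ)
    (R : Type*) [CommRing R] [Finite R]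
    (ω : R) (hω : IsPrimitiveRoot ω p) (hpu : IsUnit (p : R))
    (L : Type*) [LieRing L] [LieAlgebra R L]
    (ρ : A → (L ≃ₗ⁅R⁆ L))
    (hρone : ∀ x : L, ρ 1 x = x)
    (hρmul : ∀ g₁ g₂ : A, ∀ x : L, ρ (g₁ * g₂) x = ρ g₁ (ρ g₂ x))
    (Li : ZMod p → Submodule R L)
    (hLi : ∀ i : ZMod p, Li i = eigSp (ρ φ) (ω ^ i.val))
    (hdec : DirectSum.IsInternal Li)
    (d : ℕ)
    (hd : ∀ x ∈ F, x ≠ 1 →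
      iterBra R (fixSub ρ {x} : Set L) (fixSub ρ {x} : Set L) d = ⊥) :
    iterBra R (Set.univ : Set L) (fixSub ρ (F : Set A) : Set L) d = ⊥ := by
  classical
  haveI hfact : Fact p.Prime := ⟨hp⟩
  haveI : NeZero p := ⟨hp.pos.ne'⟩
  haveI : Fact (1 < p) := ⟨hp.one_lt⟩
  have hωp : ω ^ p = 1 := hω.pow_eq_one
  obtain ⟨invp, hinv⟩ : ∃ r : R, r * (p : R) = 1 := by
    exact ⟨↑hpu.unit⁻¹, hpu.val_inv_mul⟩
  -- group elements
  have hφF : φ ∈ F := hZF hφZ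
  have hφp : φ ^ p = 1 := hFexp φ hφF
  obtain ⟨ξ, hξF, hξZ⟩ : ∃ g, g ∈ F ∧ g ∉ Z := by
    by_contra hcon
    push_neg at hcon
    have hFZ : F = Z := le_antisymm (fun g hg => hcon g hg) hZF
    rw [hFZ, hZcard] at hFcard
    nlinarith [hp.two_le]
  have hξp : ξ ^ p = 1 := hFexp ξ hξF
  have hφ1 : φ ≠ 1 := by
    intro h
    rw [h] at hφgen
    have hZbot : Z = ⊥ := le_bot_iff.mp (by simpa [Subgroup.zpowers_one_eq_bot] using hφgen)
    rw [hZbot, Subgroup.card_bot] at hZcard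
    exact hp.one_lt.ne hZcard
  -- key subgroup lemma: if g^p = 1 and g^(b.val) ∈ K for b ≠ 0, then g ∈ K
  have hkey : ∀ (K : Subgroup A) (g : A), g ^ p = 1 → ∀ b : ZMod p, b ≠ 0 →
      g ^ b.val ∈ K → g ∈ K := by
    intro K g hg b hb hbK
    have hbc : (b * b⁻¹).val = 1 := by
      rw [mul_inv_cancel₀ hb, ZMod.val_one]
    rw [ZMod.val_mul] at hbc
    have hn : b.val * (b⁻¹).val = p * (b.val * (b⁻¹).val / p) + 1 := by
      conv_lhs => rw [← Nat.div_add_mod (b.val * (b⁻¹).val) p]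
      rw [hbc]
    have : g ^ (b.val * (b⁻¹).val) = g := by
      rw [hn, pow_add, pow_mul, hg, one_pow, one_mul, pow_one]
    rw [← this, pow_mul]
    exact K.pow_mem hbK _
  -- ρ facts
  have hρpow : ∀ (g : A) (μ : R) (v : L), ρ g v = μ • v → ∀ n : ℕ, ρ (g ^ n) v = μ ^ n • v := by
    intro g μ v hv n
    induction n with
    | zero => simpa using hρone v
    | succ m ih =>
      rw [pow_succ, pow_succ, hρmul, hv]
      calc ρ (g ^ m) (μ • v) = μ • ρ (g ^ m) v := (ρ (g ^ m)).toLieHom.map_smul μ v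
        _ = (μ ^ m * μ) • v := by rw [ih, smul_smul, mul_comm]
  -- linear endomorphisms
  set eφ : L →ₗ[R] L := (ρ φ).toLieHom.toLinearMap with heφ
  set eξ : L →ₗ[R] L := (ρ ξ).toLieHom.toLinearMap with heξ
  have hEpow : ∀ (g : A) (n : ℕ) (v : L),
      (((ρ g).toLieHom.toLinearMap) ^ n) v = ρ (g ^ n) v := by
    intro g n
    induction n with
    | zero => intro v; simpa using (hρone v).symm
    | succ m ih =>
      intro v
      rw [pow_succ, Module.End.mul_apply, pow_succ, hρmul]
      exact ih ((ρ g) v)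
  have hepφ : ∀ v : L, (eφ ^ p) v = v := by
    intro v; rw [heφ, hEpow, hφp]; exact hρone v
  have hepξ : ∀ v : L, (eξ ^ p) v = v := by
    intro v; rw [heξ, hEpow, hξp]; exact hρone v
  -- regularity of ω - 1 on L
  have hreg : ∀ x : L, ω • x = x → x = 0 := by
    intro x hx
    set E := LinearEquiv.ofBijective (DirectSum.coeLinearMap Li) hdec with hE
    set v := E.symm x with hv
    have hvx : DirectSum.coeLinearMap Li v = x := E.apply_symm_apply x
    have hsm : ω • v = v := by
      apply E.injective
      show DirectSum.coeLinearMap Li (ω • v) = DirectSum.coeLinearMap Li v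
      rw [map_smul, hvx, hx]
    have hjz : ∀ j : ZMod p, ((v j : L)) = 0 := by
      intro j
      obtain ⟨z, h1, hzeq⟩ : ∃ z : L, z ∈ Li j ∧ z = ((v j : L)) := ⟨_, (v j).2, rfl⟩
      have h2 : ω • z = z := by
        have hc : (((ω • v) j : L)) = ω • ((v j : L)) := by
          rw [DFinsupp.smul_apply]
          rfl
        rw [hzeq, ← hc, hsm]
      have h1' : ρ φ z = ω ^ j.val • z := by
        have := h1
        rw [hLi] at this
        exact this
      have h3 : z ∈ Li (j + 1) := by
        rw [hLi]
        show ρ φ z = ω ^ ((j + 1).val) • z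
        rw [omega_pow_val_add hωp, ZMod.val_one, pow_one, mul_smul, h2, h1']
      have hne : j ≠ j + 1 := by
        intro h
        have h10 : (1 : ZMod p) = 0 := by
          have := h.symm
          rwa [add_eq_left] at this
        exact one_ne_zero h10
      have hdisj : Disjoint (Li j) (Li (j + 1)) :=
        hdec.submodule_iSupIndep.pairwiseDisjoint hne
      have : z = 0 := (Submodule.disjoint_def.mp hdisj) _ h1 h3
      rw [← hzeq]
      exact this
    rw [← hvx, DirectSum.coeLinearMap_eq_dfinsuppSum]
    exact DFinsupp.sum_eq_zero fun j => hjz j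
  -- fixed-point set
  set T : Set L := (fixSub ρ (F : Set A) : Set L) with hT
  -- the common eigenspaces
  set M : ZMod p × ZMod p → Submodule R L :=
    fun ij => eigSp (ρ φ) (ω ^ ij.1.val) ⊓ eigSp (ρ ξ) (ω ^ ij.2.val) with hM
  -- commutation: ρ ξ preserves eigenspaces of ρ φ
  have hcomm : ∀ v : L, ρ φ (ρ ξ v) = ρ ξ (ρ φ v) := by
    intro v
    rw [← hρmul, ← hρmul, hFab φ hφF ξ hξF]
  -- spanning
  have hspan : (⊤ : Submodule R L) ≤ ⨆ ij, M ij := by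
    intro x _
    obtain ⟨c, -, hc2, hc3⟩ := eig_decomp p hp ω invp hωp hinv hreg eφ hepφ ⊤
      (fun y _ => Submodule.mem_top) x Submodule.mem_top
    rw [hc3]
    refine Submodule.sum_mem _ fun i _ => ?_
    have hciN : c i ∈ eigSp (ρ φ) (ω ^ i.val) := hc2 i
    have hNξ : ∀ y ∈ eigSp (ρ φ) (ω ^ i.val), eξ y ∈ eigSp (ρ φ) (ω ^ i.val) := by
      intro y hy
      show ρ φ (ρ ξ y) = ω ^ i.val • ρ ξ y
      have hy' : ρ φ y = ω ^ i.val • y := hy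
      rw [hcomm, hy']
      exact (ρ ξ).toLieHom.map_smul _ y
    obtain ⟨c', hc1', hc2', hc3'⟩ := eig_decomp p hp ω invp hωp hinv hreg eξ hepξ
      (eigSp (ρ φ) (ω ^ i.val)) hNξ (c i) hciN
    rw [hc3']
    refine Submodule.sum_mem _ fun j _ => ?_
    refine Submodule.mem_iSup_of_mem (i, j) ?_
    exact Submodule.mem_inf.mpr ⟨hc1' j, hc2' j⟩
  -- each common eigenspace is fixed by a nontrivial element of F
  have hMle : ∀ ij : ZMod p × ZMod p, ∃ x : A, x ∈ F ∧ x ≠ 1 ∧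
      (M ij : Set L) ⊆ (fixSub ρ {x} : Set L) := by
    rintro ⟨i, j⟩
    obtain ⟨a, b, hab, habz⟩ : ∃ a b : ZMod p, i * a + j * b = 0 ∧ ¬(a = 0 ∧ b = 0) := by
      by_cases hi : i = 0
      · exact ⟨1, 0, by simp [hi], by simp⟩
      · refine ⟨j, -i, by ring, ?_⟩
        rintro ⟨-, h2⟩
        exact hi (neg_eq_zero.mp h2)
    refine ⟨φ ^ a.val * ξ ^ b.val, F.mul_mem (F.pow_mem hφF _) (F.pow_mem hξF _), ?_, ?_⟩
    · intro hx1
      by_cases hb : b = 0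
      · have ha : a ≠ 0 := fun h => habz ⟨h, hb⟩
        rw [hb] at hx1
        simp only [ZMod.val_zero, pow_zero, mul_one] at hx1
        have : φ ∈ (⊥ : Subgroup A) :=
          hkey ⊥ φ hφp a ha (by simp [Subgroup.mem_bot, hx1])
        exact hφ1 (Subgroup.mem_bot.mp this)
      · have hξb : ξ ^ b.val = (φ ^ a.val)⁻¹ := (mul_eq_one_iff_inv_eq.mp hx1).symm
        have : ξ ∈ Z := by
          refine hkey Z ξ hξp b hb ?_
          rw [hξb]
          exact Z.inv_mem (Z.pow_mem hφZ _)
        exact hξZ this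
    · intro v hv
      obtain ⟨hv1, hv2⟩ := Submodule.mem_inf.mp hv
      intro g hg
      rw [Set.mem_singleton_iff] at hg
      subst hg
      have hv1' : ρ φ v = ω ^ i.val • v := hv1
      have hv2' : ρ ξ v = ω ^ j.val • v := hv2
      rw [hρmul, hρpow ξ _ v hv2' b.val]
      calc ρ (φ ^ a.val) ((ω ^ j.val) ^ b.val • v)
          = (ω ^ j.val) ^ b.val • ρ (φ ^ a.val) v :=
            (ρ (φ ^ a.val)).toLieHom.map_smul _ v
        _ = ((ω ^ j.val) ^ b.val * (ω ^ i.val) ^ a.val) • v := by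
            rw [hρpow φ _ v hv1' a.val, smul_smul]
        _ = v := by
            rw [← pow_mul, ← pow_mul, ← pow_add,
              omega_pow_natCast hωp (j.val * b.val + i.val * a.val)]
            have hcast : ((j.val * b.val + i.val * a.val : ℕ) : ZMod p) = 0 := by
              push_cast [ZMod.natCast_val, ZMod.cast_id]
              rw [← hab]; ring
            rw [hcast, ZMod.val_zero, pow_zero, one_smul]
  -- final assembly
  have hbot : ∀ ij : ZMod p × ZMod p, iterBra R (M ij : Set L) T d ≤ ⊥ := by
    intro ij
    obtain ⟨x, hxF, hx1, hsub⟩ := hMle ij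
    have hTsub : T ⊆ (fixSub ρ {x} : Set L) := by
      intro z hz
      have hz' : ∀ g' ∈ (F : Set A), ρ g' z = z := hz
      intro g hg
      rw [Set.mem_singleton_iff] at hg
      rw [hg]
      exact hz' x hxF
    calc iterBra R (M ij : Set L) T d
        ≤ iterBra R (fixSub ρ {x} : Set L) (fixSub ρ {x} : Set L) d :=
          iterBra_mono hsub hTsub d
      _ = ⊥ := hd x hxF hx1
  refine le_bot_iff.mp ?_
  calc iterBra R (Set.univ : Set L) T d
      ≤ ⨆ ij, iterBra R (M ij : Set L) T d := iterBra_univ_le_iSup M T hspan d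
    _ ≤ ⊥ := iSup_le hbot
end

section
/- Under the standing setup, suppose additionally that C_L(H) is nilpotent of class at most c. Then for every f ∈ F and every nonzero b ∈ ℤ/pℤ, [L_b, V_f, …, V_f] = 0, where V_f = C_L(ZH^f) (the fixed-point subalgebra of the subgroup generated by Z and H^f = f^{-1}Hf) occurs c times in the iterated bracket. -/
section AuxBra
variable {R : Type*} {L : Type*} [CommRing R] [LieRing L] [LieAlgebra R L]

def leftBra : L → List L → L
  | x, [] => x
  | x, t :: ts => leftBra ⁅x, t⁆ ts

@[simp] lemma leftBra_nil (x : L) : leftBra x ([] : List L) = x := rfl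
@[simp] lemma leftBra_cons (x t : L) (ts : List L) :
    leftBra x (t :: ts) = leftBra ⁅x, t⁆ ts := rfl

lemma leftBra_zero (ts : List L) : leftBra (0 : L) ts = 0 := by
  induction ts with
  | nil => rfl
  | cons t ts ih => simp [zero_lie, ih]

lemma leftBra_add (x y : L) (ts : List L) :
    leftBra (x + y) ts = leftBra x ts + leftBra y ts := by
  induction ts generalizing x y with
  | nil => rfl
  | cons t ts ih => simp [add_lie, ih]

lemma leftBra_sum {ι : Type*} (s : Finset ι) (v : ι → L) (ts : List L) :
    leftBra (∑ i ∈ s, v i) ts = ∑ i ∈ s, leftBra (v i) ts := by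
  classical
  induction s using Finset.cons_induction with
  | empty => simp [leftBra_zero]
  | cons a s ha ih => rw [Finset.sum_cons, Finset.sum_cons, leftBra_add, ih]

lemma leftBra_map (e : L → L) (hlie : ∀ a b : L, e ⁅a, b⁆ = ⁅e a, e b⁆) (x : L)
    (ts : List L) : e (leftBra x ts) = leftBra (e x) (ts.map e) := by
  induction ts generalizing x with
  | nil => rfl
  | cons t ts ih => rw [leftBra_cons, ih, hlie, List.map_cons, leftBra_cons]

lemma leftBra_eig (e : L → L) (hlie : ∀ a b : L, e ⁅a, b⁆ = ⁅e a, e b⁆)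
    (μ : R) (x : L) (ts : List L)
    (hx : e x = μ • x) (hts : ∀ t ∈ ts, e t = t) :
    e (leftBra x ts) = μ • leftBra x ts := by
  induction ts generalizing x with
  | nil => simpa using hx
  | cons t ts ih =>
    have h1 : e ⁅x, t⁆ = μ • ⁅x, t⁆ := by
      rw [hlie, hx, hts t (by simp), smul_lie]
    simpa using ih ⁅x, t⁆ h1 (fun a ha => hts a (by simp [ha]))

lemma bra_mem_braSpan {S T : Set L} {x y : L} (hx : x ∈ S) (hy : y ∈ T) :
    ⁅x, y⁆ ∈ braSpan R S T := Submodule.subset_span ⟨x, hx, y, hy, rfl⟩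

lemma braSpan_span (S T : Set L) :
    braSpan R ((Submodule.span R S : Submodule R L) : Set L) T = braSpan R S T := by
  refine le_antisymm ?_ ?_
  · rw [braSpan, Submodule.span_le]
    rintro z ⟨x, hx, y, hy, rfl⟩
    rw [SetLike.mem_coe] at hx
    induction hx using Submodule.span_induction with
    | mem a ha => exact bra_mem_braSpan ha hy
    | zero => rw [zero_lie]; exact Submodule.zero_mem _
    | add a b _ _ iha ihb => rw [add_lie]; exact add_mem iha ihb
    | smul r a _ iha => rw [smul_lie]; exact Submodule.smul_mem _ r iha
  · rw [braSpan, Submodule.span_le]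
    rintro z ⟨x, hx, y, hy, rfl⟩
    exact bra_mem_braSpan (SetLike.mem_coe.mpr (Submodule.subset_span hx)) hy

lemma iterBra_succ_shift (S T : Set L) (n : ℕ) :
    iterBra R S T (n + 1) = iterBra R {z | ∃ x ∈ S, ∃ t ∈ T, ⁅x, t⁆ = z} T n := by
  induction n with
  | zero =>
    show braSpan R ((Submodule.span R S : Submodule R L) : Set L) T = _
    rw [braSpan_span]; rfl
  | succ n ih =>
    show braSpan R ((iterBra R S T (n + 1) : Submodule R L) : Set L) T = _
    rw [ih]; rfl

lemma leftBra_mem_iterBra {S T : Set L} {x : L} (ts : List L)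
    (hx : x ∈ S) (hts : ∀ t ∈ ts, t ∈ T) :
    leftBra x ts ∈ iterBra R S T ts.length := by
  induction ts generalizing S x with
  | nil => exact Submodule.subset_span hx
  | cons t ts ih =>
    rw [List.length_cons, iterBra_succ_shift, leftBra_cons]
    exact ih ⟨x, hx, t, hts t (by simp), rfl⟩ (fun a ha => hts a (by simp [ha]))

lemma iterBra_eq_bot_of_forall {S T : Set L} {n : ℕ}
    (h : ∀ x ∈ S, ∀ ts : List L, (∀ t ∈ ts, t ∈ T) → ts.length = n → leftBra x ts = 0) :
    iterBra R S T n = ⊥ := by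
  induction n generalizing S with
  | zero =>
    show Submodule.span R S = ⊥
    rw [Submodule.span_eq_bot]
    exact fun x hx => h x hx [] (by simp) rfl
  | succ n ih =>
    rw [iterBra_succ_shift]
    apply ih
    rintro z ⟨x, hx, t, ht, rfl⟩ ts hts hlen
    exact h x hx (t :: ts)
      (fun a ha => (List.mem_cons.mp ha).elim (fun e => e ▸ ht) (hts a))
      (by simp [hlen])

end AuxBra

lemma pow_mod_of_pow_eq_one {M : Type*} [Monoid M] {g : M} {p : ℕ} (hg : g ^ p = 1)
    (a : ℕ) : g ^ a = g ^ (a % p) := by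
  conv_lhs => rw [← Nat.div_add_mod a p]
  rw [pow_add, pow_mul, hg, one_pow, one_mul]

lemma zpow_eq_pow_nat {G : Type*} [Group G] {g : G} {p : ℕ} (hp : p ≠ 0)
    (hg : g ^ p = 1) (k : ℤ) : ∃ m : ℕ, g ^ k = g ^ m := by
  have hpz : ((p : ℤ)) ≠ 0 := by exact_mod_cast hp
  refine ⟨(k % (p : ℤ)).toNat, ?_⟩
  have h0 : (0 : ℤ) ≤ k % p := Int.emod_nonneg k hpz
  conv_lhs => rw [← Int.mul_ediv_add_emod k (p : ℤ)]
  rw [zpow_add, zpow_mul, zpow_natCast, hg, one_zpow, one_mul, ← zpow_natCast,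
    Int.toNat_of_nonneg h0]


/-- Standing setup: a supersolvable Frobenius group `FH` (the finite group `A` with kernel
`F` elementary abelian of order `p^2` and cyclic complement `H` of order `q`), a subgroup
`Z ≤ F` of order `p` normal in `FH` with generator `φ`, a finite commutative ring `R` with
a primitive `p`-th root of unity `ω` in which `p` is invertible, a Lie algebra `L` over `R`
on which `FH` acts by Lie-algebra automorphisms via `ρ`, and the eigenspace decomposition
`L = ⊕_{i ∈ ℤ/pℤ} L_i` of `ρ φ`.  If moreover `C_L(H)` is nilpotent of class at most `c`,
then `[L_b, V_f, …, V_f] = 0` for every `f ∈ F` and every `b ≠ 0`, where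
`V_f = C_L(Z H^f)` occurs `c` times. -/
theorem bracket_component_with_conjugate_fixed_points_vanishes
    (p : ℕ) (hp : p.Prime)
    (A : Type*) [Group A] [Finite A] (F H : Subgroup A)
    (hFnorm : F.Normal) (hFH : F ⊓ H = ⊥) (hFHtop : F ⊔ H = ⊤)
    (hFnt : F ≠ ⊥) (hHnt : H ≠ ⊥)
    (hfrob : ∀ x ∈ H, x ≠ 1 → ∀ f ∈ F, x * f = f * x → f = 1)
    (hss : IsSupersolvable A)
    (hFcard : Nat.card F = p ^ 2) (hFexp : ∀ f ∈ F, f ^ p = 1)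
    (hFab : ∀ f ∈ F, ∀ g ∈ F, f * g = g * f)
    (q : ℕ) (hHcard : Nat.card H = q) (hHcyc : IsCyclic H)
    (Z : Subgroup A) (hZF : Z ≤ F) (hZnorm : Z.Normal) (hZcard : Nat.card Z = p)
    (φ : A) (hφZ : φ ∈ Z) (hφgen : Z ≤ Subgroup.zpowers φ)
    (R : Type*) [CommRing R] [Finite R]
    (ω : R) (hω : IsPrimitiveRoot ω p) (hpu : IsUnit (p : R))
    (L : Type*) [LieRing L] [LieAlgebra R L]
    (ρ : A → (L ≃ₗ⁅R⁆ L))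
    (hρone : ∀ x : L, ρ 1 x = x)
    (hρmul : ∀ g₁ g₂ : A, ∀ x : L, ρ (g₁ * g₂) x = ρ g₁ (ρ g₂ x))
    (Li : ZMod p → Submodule R L)
    (hLi : ∀ i : ZMod p, Li i = eigSp (ρ φ) (ω ^ i.val))
    (hdec : DirectSum.IsInternal Li)
    (c : ℕ)
    (hcH : iterBra R (fixSub ρ (H : Set A) : Set L) (fixSub ρ (H : Set A) : Set L) c = ⊥) :
    ∀ f ∈ F, ∀ b : ZMod p, b ≠ 0 →
      iterBra R (Li b : Set L)
        (fixSub ρ ((Z ⊔ conjSubgroup f H : Subgroup A) : Set A) : Set L) c = ⊥ := by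
  haveI : Fact p.Prime := ⟨hp⟩
  haveI := Fintype.ofFinite A
  intro f hf b hb
  haveI : Fintype H := Fintype.ofFinite _
  -- basic facts
  have hφF : φ ∈ F := hZF hφZ
  have hφp : φ ^ p = 1 := hFexp φ hφF
  have hωp : ω ^ p = 1 := hω.pow_eq_one
  have hφne : φ ≠ 1 := by
    intro h
    have hZbot : Z = ⊥ := by
      rw [eq_bot_iff]
      intro z hz
      obtain ⟨k, hk⟩ := Subgroup.mem_zpowers_iff.mp (hφgen hz)
      rw [h, one_zpow] at hk
      simpa [Subgroup.mem_bot] using hk.symm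
    rw [hZbot, Subgroup.card_bot] at hZcard
    exact hp.one_lt.ne' hZcard.symm
  -- ρ utilities
  have hlie_ρ : ∀ (g : A) (a b : L), ρ g ⁅a, b⁆ = ⁅ρ g a, ρ g b⁆ :=
    fun g a b => (ρ g).toLieHom.map_lie a b
  have hsmul_ρ : ∀ (g : A) (r : R) (a : L), ρ g (r • a) = r • ρ g a :=
    fun g r a => (ρ g).toLieHom.map_smul r a
  have hsum_ρ : ∀ (g : A) (s : Finset H) (v : H → L),
      ρ g (∑ i ∈ s, v i) = ∑ i ∈ s, ρ g (v i) :=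
    fun g s v => map_sum (ρ g).toLieHom.toLinearMap v s
  -- the element-level goal
  apply iterBra_eq_bot_of_forall
  intro x hx ts hts hlen
  have hfixW : ∀ t ∈ ts, ∀ g ∈ (Z ⊔ conjSubgroup f H : Subgroup A), ρ g t = t :=
    fun t ht g hg => hts t ht g hg
  set gc : H → A := fun h => f⁻¹ * (h : A) * f with hgc
  have hgHS : ∀ h : H, gc h ∈ (Z ⊔ conjSubgroup f H : Subgroup A) := by
    intro h
    apply Subgroup.mem_sup_right
    refine ⟨(h : A), h.2, ?_⟩
    simp [gc, MulAut.conj_apply]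
  have hgmul : ∀ h₁ h₂ : H, gc h₁ * gc h₂ = gc (h₁ * h₂) := by
    intro h₁ h₂; simp only [hgc, Subgroup.coe_mul]; group
  -- the character m
  have hmex : ∀ h : H, ∃ n : ℕ, (h : A)⁻¹ * φ * (h : A) = φ ^ n := by
    intro h
    have hz : (h : A)⁻¹ * φ * ((h : A)⁻¹)⁻¹ ∈ Z := hZnorm.conj_mem φ hφZ (h : A)⁻¹
    rw [inv_inv] at hz
    obtain ⟨k, hk⟩ := Subgroup.mem_zpowers_iff.mp (hφgen hz)
    obtain ⟨n, hn⟩ := zpow_eq_pow_nat hp.pos.ne' hφp k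
    exact ⟨n, by rw [← hk, hn]⟩
  choose m hm using hmex
  have e1 : Commute φ f := hFab φ hφF f hf
  have hφg : ∀ h : H, φ * gc h = gc h * φ ^ (m h) := by
    intro h
    have h1 : φ * (h : A) = (h : A) * φ ^ (m h) := by
      calc φ * (h : A) = (h : A) * ((h : A)⁻¹ * φ * (h : A)) := by group
      _ = (h : A) * φ ^ (m h) := by rw [hm h]
    have e2 : φ ^ (m h) * f = f * φ ^ (m h) := ((e1.pow_left (m h))).eq
    have e3 : φ * f⁻¹ = f⁻¹ * φ := (e1.inv_right).eq
    show φ * (f⁻¹ * (h : A) * f) = f⁻¹ * (h : A) * f * φ ^ (m h)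
    calc φ * (f⁻¹ * (h : A) * f) = (φ * f⁻¹) * ((h : A) * f) := by group
      _ = (f⁻¹ * φ) * ((h : A) * f) := by rw [e3]
      _ = f⁻¹ * (φ * (h : A)) * f := by group
      _ = f⁻¹ * ((h : A) * φ ^ (m h)) * f := by rw [h1]
      _ = (f⁻¹ * (h : A)) * (φ ^ (m h) * f) := by group
      _ = (f⁻¹ * (h : A)) * (f * φ ^ (m h)) := by rw [e2]
      _ = f⁻¹ * (h : A) * f * φ ^ (m h) := by group
  -- eigenvector facts
  have hx' : ρ φ x = ω ^ b.val • x := by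
    have := hx
    rw [SetLike.mem_coe, hLi b] at this
    exact this
  set u : L := leftBra x ts with hu
  have hφfix : ∀ t ∈ ts, ρ φ t = t :=
    fun t ht => hfixW t ht φ (Subgroup.mem_sup_left hφZ)
  have hueig : ρ φ u = ω ^ b.val • u :=
    leftBra_eig (⇑(ρ φ)) (hlie_ρ φ) (ω ^ b.val) x ts hx' hφfix
  have hρpow : ∀ k : ℕ, ρ (φ ^ k) u = (ω ^ b.val) ^ k • u := by
    intro k
    induction k with
    | zero => simp [hρone]
    | succ k ih =>
      rw [pow_succ, hρmul, hueig, hsmul_ρ, ih, smul_smul, pow_succ, mul_comm]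
  have hvLi : ∀ h : H, ρ (gc h) u ∈ Li ((m h : ZMod p) * b) := by
    intro h
    rw [hLi]
    show ρ φ (ρ (gc h) u) = ω ^ ((m h : ZMod p) * b).val • ρ (gc h) u
    rw [← hρmul, hφg h, hρmul, hρpow (m h), hsmul_ρ, ← pow_mul]
    congr 1
    have hval : ((m h : ZMod p) * b).val = (m h % p * b.val) % p := by
      rw [ZMod.val_mul, ZMod.val_natCast]
    rw [hval, pow_mod_of_pow_eq_one hωp (b.val * m h)]
    congr 1
    calc b.val * m h % p = m h * b.val % p := by rw [mul_comm]
      _ = m h % p * b.val % p :=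
          (Nat.ModEq.mul_right b.val (Nat.mod_modEq (m h) p)).symm
  have hinj : ∀ h₁ h₂ : H, ((m h₁ : ZMod p) * b) = ((m h₂ : ZMod p) * b) → h₁ = h₂ := by
    intro h₁ h₂ heq
    have hm12 : (m h₁ : ZMod p) = (m h₂ : ZMod p) := mul_right_cancel₀ hb heq
    have hmod : m h₁ % p = m h₂ % p := (ZMod.natCast_eq_natCast_iff _ _ _).mp hm12
    have hφ12 : φ ^ (m h₁) = φ ^ (m h₂) := by
      rw [pow_mod_of_pow_eq_one hφp, hmod, ← pow_mod_of_pow_eq_one hφp]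
    have q3 : (h₁ : A)⁻¹ * φ * (h₁ : A) = (h₂ : A)⁻¹ * φ * (h₂ : A) := by
      rw [hm h₁, hm h₂, hφ12]
    have q4 := congrArg (fun a => (h₁ : A) * a * (h₂ : A)⁻¹) q3
    have hcomm : ((h₁ : A) * (h₂ : A)⁻¹) * φ = φ * ((h₁ : A) * (h₂ : A)⁻¹) := by
      simp only [mul_assoc, mul_inv_cancel_left, inv_mul_cancel_left,
        mul_inv_cancel, mul_one] at q4
      simp only [mul_assoc]
      exact q4.symm
    by_contra hne
    have ht1 : (h₁ : A) * (h₂ : A)⁻¹ ≠ 1 := by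
      intro e
      exact hne (Subtype.ext (by rwa [mul_inv_eq_one] at e))
    exact hφne (hfrob ((h₁ : A) * (h₂ : A)⁻¹) (mul_mem h₁.2 (inv_mem h₂.2)) ht1 φ hφF
      hcomm)
  -- the sum y and its invariance
  set y : L := ∑ h : H, ρ (gc h) x with hy
  have hyH : ∀ h₀ : H, ρ (gc h₀) y = y := by
    intro h₀
    rw [hy, hsum_ρ]
    have : ∀ h : H, ρ (gc h₀) (ρ (gc h) x) = ρ (gc (h₀ * h)) x := by
      intro h; rw [← hρmul, hgmul]
    simp only [this]
    exact Fintype.sum_equiv (Equiv.mulLeft h₀) _ _ (fun h => rfl)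
  have hHgc : ∀ (h₀ : A), h₀ ∈ H → ∀ v : L, (∀ h : H, ρ (gc h) v = v) → ρ h₀ (ρ f v) = ρ f v := by
    intro h₀ hh₀ v hv
    rw [← hρmul]
    have : h₀ * f = f * gc ⟨h₀, hh₀⟩ := by simp only [hgc]; group
    rw [this, hρmul, hv ⟨h₀, hh₀⟩]
  have hfyH : ρ f y ∈ fixSub ρ (H : Set A) := by
    intro h₀ hh₀
    exact hHgc h₀ hh₀ y hyH
  have hftsH : ∀ t' ∈ ts.map (⇑(ρ f)), t' ∈ (fixSub ρ (H : Set A) : Set L) := by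
    intro t' ht'
    obtain ⟨t, ht, rfl⟩ := List.mem_map.mp ht'
    intro h₀ hh₀
    exact hHgc h₀ hh₀ t (fun h => hfixW t ht (gc h) (hgHS h))
  -- z = [y, ts] = 0
  have hz0 : leftBra y ts = 0 := by
    have h1 : ρ f (leftBra y ts) = leftBra (ρ f y) (ts.map (⇑(ρ f))) :=
      leftBra_map (⇑(ρ f)) (hlie_ρ f) y ts
    have h2 : leftBra (ρ f y) (ts.map (⇑(ρ f))) ∈
        iterBra R (fixSub ρ (H : Set A) : Set L) (fixSub ρ (H : Set A) : Set L) c := by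
      have := leftBra_mem_iterBra (R := R) (ts.map (⇑(ρ f))) (SetLike.mem_coe.mpr hfyH) hftsH
      rwa [List.length_map, hlen] at this
    rw [hcH, Submodule.mem_bot] at h2
    have h3 : ρ f (leftBra y ts) = 0 := h1.trans h2
    have h4 := congrArg (⇑(ρ f⁻¹)) h3
    have h0 : ρ f⁻¹ (0 : L) = 0 := by simpa using hsmul_ρ f⁻¹ 0 0
    rwa [← hρmul, inv_mul_cancel, hρone, h0] at h4
  -- z = ∑ ρ (gc h) u
  have hzsum : (∑ h : H, ρ (gc h) u) = 0 := by
    rw [← hz0, hy, leftBra_sum]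
    apply Finset.sum_congr rfl
    intro h _
    have hmap : ts.map (⇑(ρ (gc h))) = ts := by
      rw [show ts.map (⇑(ρ (gc h))) = ts.map id from
        List.map_congr_left (fun a ha => hfixW a ha (gc h) (hgHS h)), List.map_id]
    rw [hu, leftBra_map (⇑(ρ (gc h))) (hlie_ρ (gc h)) x ts, hmap]
  -- extraction via direct sum independence
  have indep := hdec.submodule_iSupIndep
  classical
  have hrest : (∑ h ∈ Finset.univ.erase (1 : H), ρ (gc h) u) ∈
      ⨆ (j : ZMod p) (_ : j ≠ (m (1 : H) : ZMod p) * b), Li j := by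
    apply Submodule.sum_mem
    intro h hh
    have hne : ((m h : ZMod p) * b) ≠ ((m (1 : H) : ZMod p) * b) :=
      fun e => (Finset.mem_erase.mp hh).1 (hinj _ _ e)
    exact le_iSup₂ (f := fun (j : ZMod p) (_ : j ≠ (m (1 : H) : ZMod p) * b) => Li j)
      _ hne (hvLi h)
  have hself : ρ (gc (1 : H)) u = - ∑ h ∈ Finset.univ.erase (1 : H), ρ (gc h) u := by
    have h5 := hzsum
    rw [← Finset.add_sum_erase _ _ (Finset.mem_univ (1 : H))] at h5
    exact eq_neg_of_add_eq_zero_left h5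
  have hkey : ρ (gc (1 : H)) u = 0 :=
    Submodule.disjoint_def.mp (indep _) _ (hvLi (1 : H))
      (by rw [hself]; exact neg_mem hrest)
  have hgc1 : gc (1 : H) = 1 := by simp [hgc]
  rwa [hgc1, hρone] at hkey
end
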